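/- arXiv:0903.0303 — 3 statements merged into one kernel-verified Lean document; each statement's English description precedes it below -/
import Mathlib

section
/- Let d ≥ 1, m ≥ 1, and let NC(d,m) be the set of non-crossing partitions π of [2dm] with all blocks of even cardinality such that no block of π contains two elements of the same interval J_k = {(k−1)d+1,...,kd}, k = 1,...,2m. Then the cardinality of NC(d,m) is at most (4d+4)^{2m}, and every π ∈ NC(d,m) has at least (d−2)m blocks of size exactly 2. -/
/-- `i` and `j` lie in the same block of the partition `P`. -/
def SameBlock {N : ℕ} (P : Finpartition (Finset.univ : Finset (Fin N))) (i j : Fin N) : Prop :=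
  ∃ b ∈ P.parts, i ∈ b ∧ j ∈ b

/-- A partition of `[N]` is non-crossing if for `i < j < k < l`, `i ∼ k` and `j ∼ l`
imply `i ∼ j`. -/
def IsNonCrossing {N : ℕ} (P : Finpartition (Finset.univ : Finset (Fin N))) : Prop :=
  ∀ i j k l : Fin N, i < j → j < k → k < l →
    SameBlock P i k → SameBlock P j l → SameBlock P i j

/-- `π ∈ NC(d,m)`: a non-crossing partition of `[2dm]` (0-indexed) with all blocks of
even cardinality such that no block contains two distinct elements of a same interval
`J_k = {(k−1)d+1,...,kd}` (0-indexed: elements with equal `i / d`). -/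
def MemNC (d m : ℕ) (π : Finpartition (Finset.univ : Finset (Fin (2 * d * m)))) : Prop :=
  IsNonCrossing π ∧ (∀ b ∈ π.parts, Even b.card) ∧
    ∀ i j : Fin (2 * d * m), i ≠ j → (i : ℕ) / d = (j : ℕ) / d → ¬ SameBlock π i j

open Finset

namespace NCProof

attribute [local instance] Classical.propDecidable

variable {N : ℕ}

noncomputable def blk (P : Finpartition (Finset.univ : Finset (Fin N))) (i : Fin N) :
    Finset (Fin N) := P.part i

lemma mem_blk_self (P : Finpartition (Finset.univ : Finset (Fin N))) (i : Fin N) :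
    i ∈ blk P i := P.mem_part (mem_univ i)

lemma blk_mem_parts (P : Finpartition (Finset.univ : Finset (Fin N))) (i : Fin N) :
    blk P i ∈ P.parts := P.part_mem.2 (mem_univ i)

variable {P Q : Finpartition (Finset.univ : Finset (Fin N))}

lemma blk_eq_of_mem {b : Finset (Fin N)} (hb : b ∈ P.parts) {i : Fin N} (hi : i ∈ b) :
    blk P i = b :=
  P.eq_of_mem_parts (blk_mem_parts P i) hb (mem_blk_self P i) hi

lemma sameBlock_iff {i j : Fin N} : SameBlock P i j ↔ j ∈ blk P i := by
  constructor
  · rintro ⟨b, hb, hib, hjb⟩; rwa [blk_eq_of_mem hb hib]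
  · intro h; exact ⟨blk P i, blk_mem_parts P i, mem_blk_self P i, h⟩

lemma blk_eq_of_mem_blk {i j : Fin N} (h : j ∈ blk P i) : blk P j = blk P i :=
  blk_eq_of_mem (blk_mem_parts P i) h

lemma sameBlock_iff_blk_eq {i j : Fin N} : SameBlock P i j ↔ blk P j = blk P i := by
  rw [sameBlock_iff]
  exact ⟨blk_eq_of_mem_blk, fun h => h ▸ mem_blk_self P j⟩

lemma sameBlock_comm {i j : Fin N} : SameBlock P i j ↔ SameBlock P j i := by
  rw [sameBlock_iff_blk_eq, sameBlock_iff_blk_eq, eq_comm]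

lemma sameBlock_refl (i : Fin N) : SameBlock P i i := sameBlock_iff.2 (mem_blk_self P i)

def isOp (P : Finpartition (Finset.univ : Finset (Fin N))) (i : Fin N) : Prop :=
  ∀ j ∈ blk P i, i ≤ j

def isCl (P : Finpartition (Finset.univ : Finset (Fin N))) (i : Fin N) : Prop :=
  ∀ j ∈ blk P i, j ≤ i

lemma below_nonempty {i : Fin N} (h : ¬ isOp P i) :
    ((blk P i).filter (fun j => j < i)).Nonempty := by
  simp only [isOp, not_forall] at h
  obtain ⟨j, hj, hij⟩ := h
  exact ⟨j, mem_filter.2 ⟨hj, lt_of_not_ge hij⟩⟩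

noncomputable def pred (P : Finpartition (Finset.univ : Finset (Fin N))) (i : Fin N)
    (h : ¬ isOp P i) : Fin N :=
  ((blk P i).filter (fun j => j < i)).max' (below_nonempty h)

lemma pred_mem_filter {i : Fin N} (h : ¬ isOp P i) :
    pred P i h ∈ (blk P i).filter (fun j => j < i) := by
  unfold pred; exact Finset.max'_mem _ _

lemma pred_mem_blk {i : Fin N} (h : ¬ isOp P i) : pred P i h ∈ blk P i :=
  (mem_filter.1 (pred_mem_filter h)).1

lemma pred_lt {i : Fin N} (h : ¬ isOp P i) : pred P i h < i :=
  (mem_filter.1 (pred_mem_filter h)).2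

lemma le_pred {i j : Fin N} (h : ¬ isOp P i) (hj : j ∈ blk P i) (hji : j < i) :
    j ≤ pred P i h := by
  unfold pred
  refine Finset.le_max' _ j ?_
  simp only [mem_filter]
  exact ⟨hj, hji⟩

/-- block of `j` has an element `≥ i`. -/
def openAt (P : Finpartition (Finset.univ : Finset (Fin N))) (j i : Fin N) : Prop :=
  ∃ e ∈ blk P j, i ≤ e

lemma openAt_pred {i : Fin N} (h : ¬ isOp P i) : openAt P (pred P i h) i :=
  ⟨i, by rw [blk_eq_of_mem_blk (pred_mem_blk h)]; exact mem_blk_self P i, le_refl i⟩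

lemma le_pred_of_openAt (hNC : IsNonCrossing P) {i : Fin N} (h : ¬ isOp P i)
    {j : Fin N} (hj : j < i) (ho : openAt P j i) : j ≤ pred P i h := by
  obtain ⟨e, he, hie⟩ := ho
  rcases eq_or_lt_of_le hie with rfl | hlt
  · -- e = i : i ∈ blk P j, so j ∈ blk P i
    have : j ∈ blk P i := by
      rw [blk_eq_of_mem_blk he]; exact mem_blk_self P j
    exact le_pred h this hj
  · by_contra hcon
    push_neg at hcon
    -- pred < j < i < e, pred ~ i, j ~ e
    have h1 : SameBlock P (pred P i h) i := by
      rw [sameBlock_comm]; exact sameBlock_iff.2 (pred_mem_blk h)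
    have h2 : SameBlock P j e := sameBlock_iff.2 he
    have h3 : SameBlock P (pred P i h) j := hNC _ _ _ _ hcon hj hlt h1 h2
    have : j ∈ blk P i := by
      rw [← blk_eq_of_mem_blk (pred_mem_blk h)]
      exact (sameBlock_iff.1 h3)
    exact absurd (le_pred h this hj) (not_le.2 hcon)

lemma openAt_iff {j i : Fin N} :
    openAt P j i ↔ ∀ c : Fin N, SameBlock P j c → c < i → ¬ isCl P c := by
  constructor
  · rintro ⟨e, he, hie⟩ c hsc hci hcl
    have hce : e ∈ blk P c := by
      rw [blk_eq_of_mem_blk (sameBlock_iff.1 hsc)]; exact he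
    exact absurd hie (not_le.2 (lt_of_le_of_lt (hcl e hce) hci))
  · intro hc
    set e := (blk P j).max' ⟨j, mem_blk_self P j⟩ with he
    have hemem : e ∈ blk P j := Finset.max'_mem _ _
    have hecl : isCl P e := by
      intro x hx
      rw [blk_eq_of_mem_blk hemem] at hx
      exact Finset.le_max' _ x hx
    by_contra hcon
    refine hc e (sameBlock_iff.2 hemem) ?_ hecl
    by_contra hlt
    exact hcon ⟨e, hemem, le_of_not_gt hlt⟩

lemma reconstruct (hP : IsNonCrossing P) (hQ : IsNonCrossing Q)
    (hO : ∀ i, isOp P i ↔ isOp Q i) (hC : ∀ i, isCl P i ↔ isCl Q i) : P = Q := by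
  have key : ∀ n : ℕ, ∀ i j : Fin N, (i : ℕ) < n → (j : ℕ) < n →
      (SameBlock P i j ↔ SameBlock Q i j) := by
    intro n
    induction n with
    | zero => intro i j hi _; omega
    | succ n IH =>
      have main : ∀ x y : Fin N, (x : ℕ) < n + 1 → (y : ℕ) < n + 1 → x < y →
          (SameBlock P x y ↔ SameBlock Q x y) := by
        intro x y hx hy hxy
        by_cases hyn : (y : ℕ) < n
        · exact IH x y (lt_trans hxy hyn) hyn
        · have hx' : (x : ℕ) < n := by
            have := (Fin.lt_def.1 hxy); omega
          -- openness transfer at y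
          have hopen : ∀ j : Fin N, j < y → (openAt P j y ↔ openAt Q j y) := by
            intro j hjy
            rw [openAt_iff, openAt_iff]
            have hjn : (j : ℕ) < n := by have := Fin.lt_def.1 hjy; omega
            constructor
            · intro hall c hsc hcy
              have hcn : (c : ℕ) < n := by have := Fin.lt_def.1 hcy; omega
              exact fun hcl => hall c ((IH j c hjn hcn).2 hsc) hcy ((hC c).2 hcl)
            · intro hall c hsc hcy
              have hcn : (c : ℕ) < n := by have := Fin.lt_def.1 hcy; omega
              exact fun hcl => hall c ((IH j c hjn hcn).1 hsc) hcy ((hC c).1 hcl)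
          constructor
          · intro hs
            have hop : ¬ isOp P y := by
              intro hop
              have : y ≤ x := hop x (sameBlock_iff.1 (sameBlock_comm.1 hs))
              exact absurd hxy (not_lt.2 this)
            have hopQ : ¬ isOp Q y := fun h => hop ((hO y).2 h)
            have hpq : pred P y hop = pred Q y hopQ := by
              apply le_antisymm
              · exact le_pred_of_openAt hQ hopQ (pred_lt hop)
                  ((hopen _ (pred_lt hop)).1 (openAt_pred hop))
              · exact le_pred_of_openAt hP hop (pred_lt hopQ)
                  ((hopen _ (pred_lt hopQ)).2 (openAt_pred hopQ))
            have hxp : SameBlock P x (pred P y hop) := by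
              rw [sameBlock_iff_blk_eq, blk_eq_of_mem_blk (pred_mem_blk hop)]
              exact (sameBlock_iff_blk_eq.1 (sameBlock_comm.1 hs)).symm
            have hpn : ((pred P y hop : Fin N) : ℕ) < n := by
              have := Fin.lt_def.1 (pred_lt hop); omega
            have hxq : SameBlock Q x (pred Q y hopQ) := by
              rw [← hpq]; exact (IH x _ hx' hpn).1 hxp
            have : SameBlock Q (pred Q y hopQ) y :=
              sameBlock_comm.1 (sameBlock_iff.2 (pred_mem_blk hopQ))
            rw [sameBlock_iff_blk_eq] at hxq this ⊢
            rw [this, hxq]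
          · intro hs
            have hop : ¬ isOp Q y := by
              intro hop
              have : y ≤ x := hop x (sameBlock_iff.1 (sameBlock_comm.1 hs))
              exact absurd hxy (not_lt.2 this)
            have hopP : ¬ isOp P y := fun h => hop ((hO y).1 h)
            have hpq : pred Q y hop = pred P y hopP := by
              apply le_antisymm
              · exact le_pred_of_openAt hP hopP (pred_lt hop)
                  ((hopen _ (pred_lt hop)).2 (openAt_pred hop))
              · exact le_pred_of_openAt hQ hop (pred_lt hopP)
                  ((hopen _ (pred_lt hopP)).1 (openAt_pred hopP))
            have hxp : SameBlock Q x (pred Q y hop) := by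
              rw [sameBlock_iff_blk_eq, blk_eq_of_mem_blk (pred_mem_blk hop)]
              exact (sameBlock_iff_blk_eq.1 (sameBlock_comm.1 hs)).symm
            have hpn : ((pred Q y hop : Fin N) : ℕ) < n := by
              have := Fin.lt_def.1 (pred_lt hop); omega
            have hxq : SameBlock P x (pred P y hopP) := by
              rw [← hpq]; exact (IH x _ hx' hpn).2 hxp
            have : SameBlock P (pred P y hopP) y :=
              sameBlock_comm.1 (sameBlock_iff.2 (pred_mem_blk hopP))
            rw [sameBlock_iff_blk_eq] at hxq this ⊢
            rw [this, hxq]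
      intro i j hi hj
      rcases lt_trichotomy i j with h | rfl | h
      · exact main i j hi hj h
      · simp [sameBlock_refl]
      · rw [sameBlock_comm, @sameBlock_comm _ Q]
        exact main j i hj hi h
  have hblk : ∀ i, blk P i = blk Q i := by
    intro i
    ext j
    rw [← @sameBlock_iff _ P, ← @sameBlock_iff _ Q]
    exact key N i j i.isLt j.isLt
  ext b
  constructor
  · intro hb
    obtain ⟨i, hi⟩ := P.nonempty_of_mem_parts hb
    rw [← blk_eq_of_mem hb hi, hblk]
    exact blk_mem_parts Q i
  · intro hb
    obtain ⟨i, hi⟩ := Q.nonempty_of_mem_parts hb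
    rw [← blk_eq_of_mem hb hi, ← hblk]
    exact blk_mem_parts P i


section NC

variable {d m : ℕ} {π : Finpartition (Finset.univ : Finset (Fin (2 * d * m)))}

lemma lemA (hd : 0 < d) (hπ : MemNC d m π) {i j : Fin (2 * d * m)} (hij : i < j)
    (hdiv : (i : ℕ) / d = (j : ℕ) / d) : isCl π i ∨ isOp π j := by
  obtain ⟨hNC, _, hint⟩ := hπ
  by_contra hcon
  push_neg at hcon
  obtain ⟨hcl, hop⟩ := hcon
  simp only [isCl, not_forall] at hcl
  obtain ⟨c, hc, hic⟩ := hcl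
  replace hic : i < c := lt_of_not_ge hic
  simp only [isOp, not_forall] at hop
  obtain ⟨a, ha, hja⟩ := hop
  replace hja : a < j := lt_of_not_ge hja
  have hsij : ¬ SameBlock π i j := hint i j (ne_of_lt hij) hdiv
  have hsic : SameBlock π i c := sameBlock_iff.2 hc
  have hcd : (c : ℕ) / d ≠ (i : ℕ) / d := fun h =>
    hint c i (fun he => absurd he.symm (ne_of_lt hic)) h (sameBlock_comm.1 hsic)
  have hjc : j < c := by
    rw [Fin.lt_def]
    apply Nat.lt_of_div_lt_div (c := d)
    have h1 : (i : ℕ) / d ≤ (c : ℕ) / d := Nat.div_le_div_right (le_of_lt hic)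
    omega
  have hsja : SameBlock π j a := sameBlock_iff.2 ha
  have had : (a : ℕ) / d ≠ (j : ℕ) / d := fun h =>
    hint a j (ne_of_lt hja) h (sameBlock_comm.1 hsja)
  have hai : a < i := by
    rw [Fin.lt_def]
    apply Nat.lt_of_div_lt_div (c := d)
    have h1 : (a : ℕ) / d ≤ (j : ℕ) / d := Nat.div_le_div_right (le_of_lt hja)
    omega
  have h3 : SameBlock π a i := hNC a i j c hai hij hjc (sameBlock_comm.1 hsja) hsic
  apply hsij
  rw [sameBlock_iff_blk_eq] at h3 hsja ⊢
  rw [h3]; exact hsja.symm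

lemma not_op_cl (hπ : MemNC d m π) (i : Fin (2 * d * m)) : ¬ (isOp π i ∧ isCl π i) := by
  rintro ⟨hop, hcl⟩
  have hb := blk_mem_parts π i
  obtain ⟨r, hr⟩ := hπ.2.1 _ hb
  have hpos : 0 < (blk π i).card := card_pos.2 ⟨i, mem_blk_self π i⟩
  have h1 : 1 < (blk π i).card := by omega
  obtain ⟨j, hj, hne⟩ := Finset.exists_mem_ne h1 i
  exact hne (le_antisymm (hcl j hj) (hop j hj))

lemma noMid (hd : 0 < d) (hπ : MemNC d m π) {i j : Fin (2 * d * m)} (hij : i < j)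
    (hdiv : (i : ℕ) / d = (j : ℕ) / d) (hi : ¬ isOp π i ∧ ¬ isCl π i)
    (hj : ¬ isOp π j ∧ ¬ isCl π j) : False := by
  rcases lemA hd hπ hij hdiv with h | h
  · exact hi.2 h
  · exact hj.1 h

lemma dc (hd : 0 < d) (hπ : MemNC d m π) {i j : Fin (2 * d * m)} (hij : i < j)
    (hdiv : (i : ℕ) / d = (j : ℕ) / d) (hj : isCl π j) : isCl π i := by
  rcases lemA hd hπ hij hdiv with h | h
  · exact h
  · exact absurd ⟨h, hj⟩ (not_op_cl hπ j)

lemma uc (hd : 0 < d) (hπ : MemNC d m π) {i j : Fin (2 * d * m)} (hij : i < j)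
    (hdiv : (i : ℕ) / d = (j : ℕ) / d) (hi : isOp π i) : isOp π j := by
  rcases lemA hd hπ hij hdiv with h | h
  · exact absurd ⟨hi, h⟩ (not_op_cl hπ i)
  · exact h

lemma card_seg (hd : 0 < d) {k t : ℕ} (hkt : k * d ≤ t) (htd : t ≤ k * d + d)
    (htN : t ≤ 2 * d * m) :
    (univ.filter (fun j : Fin (2 * d * m) => (j : ℕ) / d = k ∧ (j : ℕ) < t)).card = t - k * d := by
  rw [← Nat.card_Ico (k * d) t]
  apply Finset.card_bij (fun (j : Fin (2 * d * m)) _ => (j : ℕ))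
  · intro j hj
    simp only [mem_filter, mem_univ, true_and] at hj
    rw [Finset.mem_Ico]
    refine ⟨?_, hj.2⟩
    calc k * d = (j : ℕ) / d * d := by rw [hj.1]
      _ ≤ (j : ℕ) := Nat.div_mul_le_self _ _
  · intro a _ b _ hab
    exact Fin.ext hab
  · intro n hn
    rw [Finset.mem_Ico] at hn
    refine ⟨⟨n, lt_of_lt_of_le hn.2 htN⟩, ?_, rfl⟩
    simp only [mem_filter, mem_univ, true_and]
    exact ⟨Nat.div_eq_of_lt_le hn.1 (by rw [Nat.succ_mul]; omega), hn.2⟩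

lemma card_Iv (hd : 0 < d) {k : ℕ} (hk : k < 2 * m) :
    (univ.filter (fun j : Fin (2 * d * m) => (j : ℕ) / d = k)).card = d := by
  have he : (univ.filter (fun j : Fin (2 * d * m) => (j : ℕ) / d = k)) =
      univ.filter (fun j : Fin (2 * d * m) => (j : ℕ) / d = k ∧ (j : ℕ) < k * d + d) := by
    ext j
    simp only [mem_filter, mem_univ, true_and, iff_self_and]
    intro h
    have h1 := Nat.div_add_mod (j : ℕ) d
    have h2 := Nat.mod_lt (j : ℕ) hd
    have h3 : d * ((j : ℕ) / d) = d * k := by rw [h]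
    have h4 : k * d = d * k := Nat.mul_comm _ _
    omega
  have hN : k * d + d ≤ 2 * d * m := by
    calc k * d + d = (k + 1) * d := by ring
      _ ≤ 2 * m * d := Nat.mul_le_mul_right _ (by omega)
      _ = 2 * d * m := by ring
  rw [he, card_seg hd (Nat.le_add_right _ _) (le_refl _) hN]
  omega

lemma card_lt_self (hd : 0 < d) (i : Fin (2 * d * m)) :
    (univ.filter (fun j : Fin (2 * d * m) =>
      (j : ℕ) / d = (i : ℕ) / d ∧ (j : ℕ) < (i : ℕ))).card = (i : ℕ) % d := by
  have h1 := Nat.div_add_mod (i : ℕ) d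
  have h2 := Nat.mod_lt (i : ℕ) hd
  have h3 : (i : ℕ) / d * d = d * ((i : ℕ) / d) := Nat.mul_comm _ _
  rw [card_seg hd (by omega : (i : ℕ) / d * d ≤ (i : ℕ))
    (by omega) (le_of_lt i.isLt)]
  omega

lemma card_le_self (hd : 0 < d) (i : Fin (2 * d * m)) :
    (univ.filter (fun j : Fin (2 * d * m) =>
      (j : ℕ) / d = (i : ℕ) / d ∧ (j : ℕ) < (i : ℕ) + 1)).card = (i : ℕ) % d + 1 := by
  have h1 := Nat.div_add_mod (i : ℕ) d
  have h2 := Nat.mod_lt (i : ℕ) hd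
  have h3 : (i : ℕ) / d * d = d * ((i : ℕ) / d) := Nat.mul_comm _ _
  rw [card_seg hd (by omega : (i : ℕ) / d * d ≤ (i : ℕ) + 1) (by omega) i.isLt]
  omega

noncomputable def aCl (d m : ℕ) (π : Finpartition (Finset.univ : Finset (Fin (2 * d * m))))
    (k : ℕ) : ℕ :=
  (univ.filter (fun j : Fin (2 * d * m) => (j : ℕ) / d = k ∧ isCl π j)).card

noncomputable def mCnt (d m : ℕ) (π : Finpartition (Finset.univ : Finset (Fin (2 * d * m))))
    (k : ℕ) : ℕ :=
  (univ.filter (fun j : Fin (2 * d * m) =>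
    (j : ℕ) / d = k ∧ ¬ isOp π j ∧ ¬ isCl π j)).card

lemma div_lt_2m (hd : 0 < d) (i : Fin (2 * d * m)) : (i : ℕ) / d < 2 * m := by
  rw [Nat.div_lt_iff_lt_mul hd]
  calc (i : ℕ) < 2 * d * m := i.isLt
    _ = 2 * m * d := by ring

lemma aCl_le (hd : 0 < d) {k : ℕ} (hk : k < 2 * m) : aCl d m π k ≤ d := by
  refine le_trans (Finset.card_le_card ?_) (le_of_eq (card_Iv hd hk))
  intro j hj
  simp only [mem_filter, mem_univ, true_and] at hj ⊢
  exact hj.1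

lemma mCnt_le (hd : 0 < d) (hπ : MemNC d m π) (k : ℕ) : mCnt d m π k ≤ 1 := by
  rw [mCnt, Finset.card_le_one]
  intro a ha b hb
  simp only [mem_filter, mem_univ, true_and] at ha hb
  by_contra hne
  rcases lt_or_gt_of_ne (fun h : a = b => hne h) with h | h
  · exact noMid hd hπ h (ha.1.trans hb.1.symm) ha.2 hb.2
  · exact noMid hd hπ h (hb.1.trans ha.1.symm) hb.2 ha.2

lemma claimCl (hd : 0 < d) (hπ : MemNC d m π) (i : Fin (2 * d * m)) :
    isCl π i ↔ (i : ℕ) % d < aCl d m π ((i : ℕ) / d) := by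
  constructor
  · intro h
    have hsub : univ.filter (fun j : Fin (2 * d * m) =>
        (j : ℕ) / d = (i : ℕ) / d ∧ (j : ℕ) < (i : ℕ) + 1) ⊆
        univ.filter (fun j : Fin (2 * d * m) =>
        (j : ℕ) / d = (i : ℕ) / d ∧ isCl π j) := by
      intro j hj
      simp only [mem_filter, mem_univ, true_and] at hj ⊢
      refine ⟨hj.1, ?_⟩
      rcases eq_or_lt_of_le (Nat.lt_succ_iff.1 hj.2) with he | hlt
      · rwa [show j = i from Fin.ext he]
      · exact dc hd hπ (Fin.lt_def.2 hlt) hj.1 h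
    have := Finset.card_le_card hsub
    rw [card_le_self hd i] at this
    exact lt_of_lt_of_le (Nat.lt_succ_self _) (this.trans_eq rfl)
  · intro h
    by_contra hcl
    have hsub : univ.filter (fun j : Fin (2 * d * m) =>
        (j : ℕ) / d = (i : ℕ) / d ∧ isCl π j) ⊆
        univ.filter (fun j : Fin (2 * d * m) =>
        (j : ℕ) / d = (i : ℕ) / d ∧ (j : ℕ) < (i : ℕ)) := by
      intro j hj
      simp only [mem_filter, mem_univ, true_and] at hj ⊢
      refine ⟨hj.1, ?_⟩
      rcases lt_trichotomy (j : ℕ) (i : ℕ) with hlt | he | hgt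
      · exact hlt
      · exact absurd (Fin.ext he ▸ hj.2) hcl
      · exact absurd (dc hd hπ (Fin.lt_def.2 hgt) hj.1.symm hj.2) hcl
    have := Finset.card_le_card hsub
    rw [card_lt_self hd i] at this
    rw [aCl] at h
    omega

lemma split_three (hd : 0 < d) (hπ : MemNC d m π) {k : ℕ} (hk : k < 2 * m) :
    aCl d m π k + (univ.filter (fun j : Fin (2 * d * m) =>
      (j : ℕ) / d = k ∧ isOp π j)).card + mCnt d m π k = d := by
  classical
  have h1 := Finset.card_filter_add_card_filter_not
    (s := univ.filter (fun j : Fin (2 * d * m) => (j : ℕ) / d = k))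
    (p := fun j => isCl π j)
  have h2 := Finset.card_filter_add_card_filter_not
    (s := (univ.filter (fun j : Fin (2 * d * m) => (j : ℕ) / d = k)).filter
      (fun j => ¬ isCl π j))
    (p := fun j => isOp π j)
  rw [card_Iv hd hk] at h1
  have e1 : (univ.filter (fun j : Fin (2 * d * m) => (j : ℕ) / d = k)).filter
      (fun j => isCl π j) =
      univ.filter (fun j : Fin (2 * d * m) => (j : ℕ) / d = k ∧ isCl π j) := by
    rw [Finset.filter_filter]
  have e2 : ((univ.filter (fun j : Fin (2 * d * m) => (j : ℕ) / d = k)).filter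
      (fun j => ¬ isCl π j)).filter (fun j => isOp π j) =
      univ.filter (fun j : Fin (2 * d * m) => (j : ℕ) / d = k ∧ isOp π j) := by
    rw [Finset.filter_filter, Finset.filter_filter]
    apply Finset.filter_congr
    intro j _
    have hno := not_op_cl hπ j
    tauto
  have e3 : ((univ.filter (fun j : Fin (2 * d * m) => (j : ℕ) / d = k)).filter
      (fun j => ¬ isCl π j)).filter (fun j => ¬ isOp π j) =
      univ.filter (fun j : Fin (2 * d * m) => (j : ℕ) / d = k ∧ ¬ isOp π j ∧ ¬ isCl π j) := by
    rw [Finset.filter_filter, Finset.filter_filter]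
    apply Finset.filter_congr
    intro j _
    tauto
  rw [e1] at h1
  rw [e2, e3] at h2
  rw [aCl, mCnt]
  omega

lemma claimOp (hd : 0 < d) (hπ : MemNC d m π) (i : Fin (2 * d * m)) :
    isOp π i ↔ aCl d m π ((i : ℕ) / d) + mCnt d m π ((i : ℕ) / d) ≤ (i : ℕ) % d := by
  have hk : (i : ℕ) / d < 2 * m := div_lt_2m hd i
  have hsplit := split_three hd hπ (π := π) hk
  have hmod := Nat.mod_lt (i : ℕ) hd
  have hge : (univ.filter (fun j : Fin (2 * d * m) =>
      (j : ℕ) / d = (i : ℕ) / d ∧ ¬ ((j : ℕ) < (i : ℕ)))).card = d - (i : ℕ) % d := by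
    have h1 := Finset.card_filter_add_card_filter_not
      (s := univ.filter (fun j : Fin (2 * d * m) => (j : ℕ) / d = (i : ℕ) / d))
      (p := fun j => (j : ℕ) < (i : ℕ))
    rw [card_Iv hd hk, Finset.filter_filter, Finset.filter_filter] at h1
    have h2 := card_lt_self (m := m) hd i
    omega
  constructor
  · intro h
    have hsub : univ.filter (fun j : Fin (2 * d * m) =>
        (j : ℕ) / d = (i : ℕ) / d ∧ ¬ ((j : ℕ) < (i : ℕ))) ⊆
        univ.filter (fun j : Fin (2 * d * m) =>
        (j : ℕ) / d = (i : ℕ) / d ∧ isOp π j) := by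
      intro j hj
      simp only [mem_filter, mem_univ, true_and, not_lt] at hj ⊢
      refine ⟨hj.1, ?_⟩
      rcases eq_or_lt_of_le hj.2 with he | hlt
      · rwa [show j = i from Fin.ext he.symm]
      · exact uc hd hπ (Fin.lt_def.2 hlt) hj.1.symm h
    have := Finset.card_le_card hsub
    rw [hge] at this
    omega
  · intro h
    by_contra hop
    have hsub : univ.filter (fun j : Fin (2 * d * m) =>
        (j : ℕ) / d = (i : ℕ) / d ∧ isOp π j) ⊆
        (univ.filter (fun j : Fin (2 * d * m) =>
        (j : ℕ) / d = (i : ℕ) / d ∧ ¬ ((j : ℕ) < (i : ℕ)))).erase i := by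
      intro j hj
      simp only [mem_filter, mem_univ, true_and, Finset.mem_erase, not_lt] at hj ⊢
      have hne : j ≠ i := by
        rintro rfl
        exact hop hj.2
      refine ⟨hne, hj.1, ?_⟩
      rcases lt_trichotomy (i : ℕ) (j : ℕ) with hlt | he | hgt
      · exact le_of_lt hlt
      · exact absurd (Fin.ext he.symm) hne
      · exact absurd (uc hd hπ (Fin.lt_def.2 hgt) hj.1 hj.2) hop
    have hle := Finset.card_le_card hsub
    have hmem : i ∈ univ.filter (fun j : Fin (2 * d * m) =>
        (j : ℕ) / d = (i : ℕ) / d ∧ ¬ ((j : ℕ) < (i : ℕ))) := by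
      simp only [mem_filter, mem_univ, true_and, not_lt]
      exact le_refl _
    rw [Finset.card_erase_of_mem hmem, hge] at hle
    omega

end NC

end NCProof

open NCProof

/-- `|NC(d,m)| ≤ (4d+4)^{2m}`, and every `π ∈ NC(d,m)` has at least `(d−2)m` blocks of
size exactly `2`. -/
theorem card_NC_le (d m : ℕ) (hd : 0 < d) (hm : 0 < m) :
    Nat.card {π : Finpartition (Finset.univ : Finset (Fin (2 * d * m))) // MemNC d m π} ≤
        (4 * d + 4) ^ (2 * m) ∧
      ∀ π : Finpartition (Finset.univ : Finset (Fin (2 * d * m))), MemNC d m π →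
        (d - 2) * m ≤ (π.parts.filter (fun b => b.card = 2)).card := by
  classical
  constructor
  · -- cardinality bound
    have hinj : Function.Injective
        (fun (π : {π : Finpartition (Finset.univ : Finset (Fin (2 * d * m))) // MemNC d m π}) =>
          (fun k : Fin (2 * m) =>
            (⟨aCl d m π.1 (k : ℕ) + (d + 1) * mCnt d m π.1 (k : ℕ), by
              have h1 : aCl d m π.1 (k : ℕ) ≤ d := aCl_le hd k.isLt
              have h2 : mCnt d m π.1 (k : ℕ) ≤ 1 := mCnt_le hd π.2 (k : ℕ)
              have h3 : (d + 1) * mCnt d m π.1 (k : ℕ) ≤ (d + 1) * 1 :=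
                Nat.mul_le_mul_left _ h2
              omega⟩ : Fin (2 * d + 2)))) := by
      intro π π' heq
      have hk : ∀ k : ℕ, k < 2 * m →
          aCl d m π.1 k = aCl d m π'.1 k ∧ mCnt d m π.1 k = mCnt d m π'.1 k := by
        intro k hkm
        have hc := congrFun heq ⟨k, hkm⟩
        have hv : aCl d m π.1 k + (d + 1) * mCnt d m π.1 k =
            aCl d m π'.1 k + (d + 1) * mCnt d m π'.1 k := congrArg Fin.val hc
        have h1 : aCl d m π.1 k ≤ d := aCl_le hd hkm
        have h1' : aCl d m π'.1 k ≤ d := aCl_le hd hkm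
        have h2 : mCnt d m π.1 k ≤ 1 := mCnt_le hd π.2 k
        have h2' : mCnt d m π'.1 k ≤ 1 := mCnt_le hd π'.2 k
        rcases Nat.le_one_iff_eq_zero_or_eq_one.1 h2 with h | h <;>
          rcases Nat.le_one_iff_eq_zero_or_eq_one.1 h2' with h' | h' <;>
          rw [h, h'] at hv ⊢ <;> omega
      apply Subtype.ext
      apply reconstruct π.2.1 π'.2.1
      · intro i
        rw [claimOp hd π.2, claimOp hd π'.2,
          (hk _ (div_lt_2m hd i)).1, (hk _ (div_lt_2m hd i)).2]
      · intro i
        rw [claimCl hd π.2, claimCl hd π'.2, (hk _ (div_lt_2m hd i)).1]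
    calc Nat.card {π : Finpartition (Finset.univ : Finset (Fin (2 * d * m))) // MemNC d m π}
        ≤ Nat.card (Fin (2 * m) → Fin (2 * d + 2)) :=
          Nat.card_le_card_of_injective _ hinj
      _ = (2 * d + 2) ^ (2 * m) := by
          rw [Nat.card_fun]
          simp [Nat.card_eq_fintype_card]
      _ ≤ (4 * d + 4) ^ (2 * m) := Nat.pow_le_pow_left (by omega) _
  · -- blocks of size 2
    intro π hπ
    set mid : Fin (2 * d * m) → Prop := fun i => ¬ isOp π i ∧ ¬ isCl π i with hmid
    set Mset : Finset (Fin (2 * d * m)) := Finset.univ.filter mid with hMset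
    have hblock : ∀ b ∈ π.parts, (b.filter mid).card + 2 = b.card := by
      intro b hb
      have hne : b.Nonempty := π.nonempty_of_mem_parts hb
      obtain ⟨r, hr⟩ := hπ.2.1 b hb
      have hpos : 0 < b.card := Finset.card_pos.2 hne
      have hcard2 : 1 < b.card := by omega
      have hfil : b.filter (fun i => ¬ mid i) = {b.min' hne, b.max' hne} := by
        ext x
        simp only [Finset.mem_filter, Finset.mem_insert, Finset.mem_singleton, hmid,
          not_and, not_not]
        constructor
        · rintro ⟨hx, h⟩
          by_cases hop : isOp π x
          · left
            refine le_antisymm ?_ (Finset.min'_le b x hx)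
            apply hop
            rw [blk_eq_of_mem hb hx]
            exact Finset.min'_mem b hne
          · right
            have hcl := h hop
            refine le_antisymm ?_ ?_
            · apply Finset.le_max' b x hx
            · apply hcl
              rw [blk_eq_of_mem hb hx]
              exact Finset.max'_mem b hne
        · rintro (rfl | rfl)
          · refine ⟨Finset.min'_mem b hne, fun hop => absurd ?_ hop⟩
            intro j hj
            rw [blk_eq_of_mem hb (Finset.min'_mem b hne)] at hj
            exact Finset.min'_le b j hj
          · refine ⟨Finset.max'_mem b hne, fun _ => ?_⟩
            intro j hj
            rw [blk_eq_of_mem hb (Finset.max'_mem b hne)] at hj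
            exact Finset.le_max' b j hj
      have hfc : (b.filter (fun i => ¬ mid i)).card = 2 := by
        rw [hfil]
        rw [Finset.card_insert_of_notMem, Finset.card_singleton]
        simp only [Finset.mem_singleton]
        exact ne_of_lt (Finset.min'_lt_max'_of_card b hcard2)
      have := Finset.card_filter_add_card_filter_not (s := b) (p := mid)
      omega
    have hMcard : Mset.card = ∑ b ∈ π.parts, (b.filter mid).card := by
      have hU : Mset = π.parts.biUnion (fun b => b.filter mid) := by
        ext i
        simp only [hMset, Finset.mem_filter, Finset.mem_univ, true_and, Finset.mem_biUnion]
        constructor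
        · intro h
          exact ⟨blk π i, blk_mem_parts π i, mem_blk_self π i, h⟩
        · rintro ⟨b, _, _, h⟩
          exact h
      rw [hU]
      apply Finset.card_biUnion
      intro x hx y hy hxy
      exact Finset.disjoint_filter_filter
        (π.disjoint (Finset.mem_coe.2 hx) (Finset.mem_coe.2 hy) hxy)
    have hsum : Mset.card + 2 * π.parts.card = 2 * d * m := by
      have h1 : ∑ b ∈ π.parts, ((b.filter mid).card + 2) = ∑ b ∈ π.parts, b.card :=
        Finset.sum_congr rfl (fun b hb => hblock b hb)
      rw [Finset.sum_add_distrib, Finset.sum_const, smul_eq_mul] at h1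
      have h2 : ∑ b ∈ π.parts, b.card = 2 * d * m := by
        rw [π.sum_card_parts]
        simp
      omega
    have hM2m : Mset.card ≤ 2 * m := by
      have hmaps : ∀ i ∈ Mset, (i : ℕ) / d ∈ Finset.range (2 * m) := by
        intro i _
        rw [Finset.mem_range]
        exact div_lt_2m hd i
      have hle := Finset.card_le_card_of_injOn (fun i : Fin (2 * d * m) => (i : ℕ) / d) hmaps ?_
      · simpa using hle
      · intro i hi j hj hdiv
        rw [Finset.mem_coe] at hi hj
        simp only [hMset, Finset.mem_filter, Finset.mem_univ, true_and, hmid] at hi hj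
        by_contra hne
        rcases lt_or_gt_of_ne hne with h | h
        · exact noMid hd hπ h hdiv hi hj
        · exact noMid hd hπ h hdiv.symm hj hi
    have hsplit4 := Finset.card_filter_add_card_filter_not
      (s := π.parts) (p := fun b => b.card = 2)
    have h2b4 : 2 * (π.parts.filter (fun b => ¬ b.card = 2)).card ≤ Mset.card := by
      have hbig : ∀ b ∈ π.parts.filter (fun b => ¬ b.card = 2), 2 ≤ (b.filter mid).card := by
        intro b hb
        rw [Finset.mem_filter] at hb
        obtain ⟨r, hr⟩ := hπ.2.1 b hb.1
        have := hblock b hb.1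
        have hne2 := hb.2
        omega
      calc 2 * (π.parts.filter (fun b => ¬ b.card = 2)).card
          = (π.parts.filter (fun b => ¬ b.card = 2)).card • 2 := by
            rw [smul_eq_mul, Nat.mul_comm]
        _ ≤ ∑ b ∈ π.parts.filter (fun b => ¬ b.card = 2), (b.filter mid).card :=
            Finset.card_nsmul_le_sum _ _ _ hbig
        _ ≤ ∑ b ∈ π.parts, (b.filter mid).card :=
            Finset.sum_le_sum_of_subset (Finset.filter_subset _ _)
        _ = Mset.card := hMcard.symm
    rcases le_or_gt d 1 with hd1 | hd2
    · have : d - 2 = 0 := by omega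
      rw [this, Nat.zero_mul]
      exact Nat.zero_le _
    · have hY : (d - 2) * m + 2 * m = d * m := by
        rw [← Nat.add_mul]
        congr 1
        omega
      have hass : 2 * d * m = 2 * (d * m) := by ring
      omega
end

section
/- Let d, m ≥ 1, and for π ∈ NC*(d,m) let π|_{A_i} denote its restriction to the label class A_i (a non-crossing partition of a 2m-element set, identified with [2m]), and let Φ denote the quotient map from non-crossing even partitions of [2m] to partitions of [m] identifying 2k−1 and 2k. Then for any π ∈ NC*(d,m) and any 1 ≤ i < j ≤ d, the partition Φ(π|_{A_j}) is finer than Φ(π|_{A_i}); that is, the map P(π) = (Φ(π|_{A₁}),...,Φ(π|_{A_d})) takes values in the set of non-decreasing (in refinement order) chains of non-crossing partitions of [m]. -/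
open Classical

/-- The (0-based) label of the 0-indexed element `j` of `[2dm]`: intervals `J_k` of size
`d`, labelled `0,...,d−1` on even-indexed (0-based) intervals and `d−1,...,0` on odd ones. -/
def label (d j : ℕ) : ℕ :=
  if (j / d) % 2 = 0 then j % d else d - 1 - j % d

/-- The element of the label class `A_i` lying in the `t`-th interval `J_t` (0-based):
it is the `t`-th element of `A_i ≃ [2m]`. -/
def elemAt {d m : ℕ} (i : Fin d) (t : Fin (2 * m)) : Fin (2 * d * m) :=
  ⟨t.val * d + (if t.val % 2 = 0 then i.val else d - 1 - i.val), by
    have h1 : (if t.val % 2 = 0 then i.val else d - 1 - i.val) < d := by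
      have := i.isLt; split <;> omega
    refine lt_of_lt_of_le (Nat.add_lt_add_left h1 _) ?_
    calc t.val * d + d = (t.val + 1) * d := by ring
      _ ≤ (2 * m) * d := Nat.mul_le_mul_right d t.isLt
      _ = 2 * d * m := by ring⟩

/-- The relation `Φ(π|_{A_i})` on `[m]`: restrict `π` to the label class `A_i`
(identified with `[2m]` via `elemAt i`), then take the quotient identifying `2k−1`
and `2k` (0-indexed: positions `2k` and `2k+1`). -/
def PhiRestRel {d m : ℕ} (π : Finpartition (Finset.univ : Finset (Fin (2 * d * m))))
    (i : Fin d) : Fin m → Fin m → Prop :=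
  Relation.EqvGen (fun k l =>
    ∃ s t : Fin (2 * m), (s.val = 2 * k.val ∨ s.val = 2 * k.val + 1) ∧
      (t.val = 2 * l.val ∨ t.val = 2 * l.val + 1) ∧
      SameBlock π (elemAt i s) (elemAt i t))

section Aux

variable {d m : ℕ}

lemma elemAt_val (i : Fin d) (t : Fin (2 * m)) :
    (elemAt i t).val = t.val * d + (if t.val % 2 = 0 then i.val else d - 1 - i.val) := rfl

lemma elemAt_if_lt (i : Fin d) (t : Fin (2 * m)) :
    (if t.val % 2 = 0 then i.val else d - 1 - i.val) < d := by
  have := i.isLt; split <;> omega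

lemma elemAt_lt_elemAt {i i' : Fin d} {u v : Fin (2 * m)} (h : u.val < v.val) :
    (elemAt i u).val < (elemAt i' v).val := by
  have h1 := elemAt_if_lt i u
  have h2 : (u.val + 1) * d ≤ v.val * d := Nat.mul_le_mul_right d h
  have h3 : (u.val + 1) * d = u.val * d + d := by ring
  rw [elemAt_val, elemAt_val]
  omega

lemma elemAt_inj {i : Fin d} : Function.Injective (elemAt (m := m) i) := by
  intro u v h
  by_contra hne
  rcases Fin.lt_or_lt_of_ne hne with hlt | hlt
  · exact absurd (congrArg Fin.val h) (Nat.ne_of_lt (elemAt_lt_elemAt hlt))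
  · exact absurd (congrArg Fin.val h).symm (Nat.ne_of_lt (elemAt_lt_elemAt hlt))

lemma elemAt_lt_same_even {i j : Fin d} {u : Fin (2 * m)} (hu : u.val % 2 = 0)
    (h : i.val < j.val) : (elemAt i u).val < (elemAt j u).val := by
  rw [elemAt_val, elemAt_val, if_pos hu, if_pos hu]; omega

lemma elemAt_lt_same_odd {i j : Fin d} {u : Fin (2 * m)} (hu : u.val % 2 = 1)
    (h : i.val < j.val) : (elemAt j u).val < (elemAt i u).val := by
  have hj := j.isLt
  rw [elemAt_val, elemAt_val, if_neg (by omega), if_neg (by omega)]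
  omega

lemma label_elemAt (hd : 0 < d) (i : Fin d) (t : Fin (2 * m)) :
    label d (elemAt i t).val = i.val := by
  have hc := elemAt_if_lt i t
  have hi := i.isLt
  unfold label
  rw [elemAt_val]
  have hdiv : (t.val * d + (if t.val % 2 = 0 then i.val else d - 1 - i.val)) / d = t.val := by
    rw [Nat.add_comm, Nat.add_mul_div_right _ _ hd, Nat.div_eq_of_lt hc, Nat.zero_add]
  have hmod : (t.val * d + (if t.val % 2 = 0 then i.val else d - 1 - i.val)) % d
      = (if t.val % 2 = 0 then i.val else d - 1 - i.val) := by
    rw [Nat.add_comm, Nat.add_mul_mod_self_right, Nat.mod_eq_of_lt hc]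
  rw [hdiv, hmod]
  rcases Nat.even_or_odd t.val with he | ho
  · rw [Nat.even_iff] at he
    rw [if_pos he, if_pos he]
  · rw [Nat.odd_iff] at ho
    rw [if_neg (by omega), if_neg (by omega)]
    omega

lemma eq_elemAt_of_label (hd : 0 < d) (i : Fin d) (x : Fin (2 * d * m))
    (hx : label d x.val = i.val) : ∃ u : Fin (2 * m), x = elemAt i u := by
  have hlt : x.val / d < 2 * m := by
    have h1 := x.isLt
    have h2 : 2 * d * m = 2 * m * d := by ring
    rw [Nat.div_lt_iff_lt_mul hd]
    omega
  refine ⟨⟨x.val / d, hlt⟩, Fin.ext ?_⟩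
  rw [elemAt_val]
  simp only
  have hdm : x.val / d * d + x.val % d = x.val := Nat.div_add_mod' x.val d
  have hmlt : x.val % d < d := Nat.mod_lt _ hd
  have hi := i.isLt
  unfold label at hx
  by_cases h2 : (x.val / d) % 2 = 0
  · rw [if_pos h2] at hx
    rw [if_pos h2]
    omega
  · rw [if_neg h2] at hx
    rw [if_neg h2]
    omega

section SB

variable {N : ℕ} {P : Finpartition (Finset.univ : Finset (Fin N))}

lemma sb_refl (x : Fin N) : SameBlock P x x := by
  obtain ⟨b, hb, hx⟩ := P.exists_mem (Finset.mem_univ x)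
  exact ⟨b, hb, hx, hx⟩

lemma sb_symm {x y : Fin N} (h : SameBlock P x y) : SameBlock P y x := by
  obtain ⟨b, hb, hx, hy⟩ := h; exact ⟨b, hb, hy, hx⟩

lemma sb_trans {x y z : Fin N} (h1 : SameBlock P x y) (h2 : SameBlock P y z) :
    SameBlock P x z := by
  obtain ⟨b, hb, hx, hy⟩ := h1
  obtain ⟨c, hc, hy', hz⟩ := h2
  cases P.eq_of_mem_parts hb hc hy hy'
  exact ⟨b, hb, hx, hz⟩

/-- A block having an element strictly inside the arc `(x, y)` of a block, but not
equal to that block, stays strictly inside. -/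
lemma enclose (hnc : IsNonCrossing P) {x y z w : Fin N} (hxy : SameBlock P x y)
    (hxz : x < z) (hzy : z < y) (hnxz : ¬ SameBlock P x z) (hzw : SameBlock P z w) :
    x < w ∧ w < y := by
  constructor
  · rcases lt_trichotomy w x with hw | hw | hw
    · exfalso
      have h := hnc w x z y hw hxz hzy (sb_symm hzw) hxy
      exact hnxz (sb_trans (sb_symm h) (sb_symm hzw))
    · subst hw; exact absurd (sb_symm hzw) hnxz
    · exact hw
  · rcases lt_trichotomy w y with hw | hw | hw
    · exact hw
    · subst hw; exact absurd (sb_trans hxy (sb_symm hzw)) hnxz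
    · exfalso
      have h := hnc x z y w hxz hzy hw hxy hzw
      exact hnxz h

end SB

end Aux

lemma key (d m : ℕ) (hd : 0 < d)
    (π : Finpartition (Finset.univ : Finset (Fin (2 * d * m))))
    (hnc : IsNonCrossing π) (heven : ∀ b ∈ π.parts, Even b.card)
    (i : Fin d) :
    ∀ n : ℕ, ∀ k l : Fin m, l.val - k.val ≤ n → k.val < l.val →
      (∀ u : Fin (2 * m), 2 * k.val + 1 ≤ u.val → u.val ≤ 2 * l.val →
        ∀ x, SameBlock π (elemAt i u) x →
          ∃ u' : Fin (2 * m), 2 * k.val + 1 ≤ u'.val ∧ u'.val ≤ 2 * l.val ∧ x = elemAt i u') →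
      PhiRestRel π i k l := by
  intro n
  induction n with
  | zero => intro k l hn hkl _; omega
  | succ n ih =>
    intro k l hn hkl closed
    have hlm := l.isLt
    have ha2 : 2 * k.val + 1 < 2 * m := by omega
    set a : Fin (2 * m) := ⟨2 * k.val + 1, ha2⟩ with ha_def
    have haval : a.val = 2 * k.val + 1 := rfl
    obtain ⟨B, hB, haB⟩ := π.exists_mem (Finset.mem_univ (elemAt i a))
    have hBmem : ∀ x ∈ B, SameBlock π (elemAt i a) x := fun x hx => ⟨B, hB, haB, hx⟩
    have hBsub : ∀ x ∈ B, ∃ u' : Fin (2 * m),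
        2 * k.val + 1 ≤ u'.val ∧ u'.val ≤ 2 * l.val ∧ x = elemAt i u' := by
      intro x hx
      exact closed a (by omega) (by omega) x (hBmem x hx)
    classical
    set V : Finset (Fin (2 * m)) := Finset.univ.filter (fun u => elemAt i u ∈ B) with hV_def
    have hmemV : ∀ u : Fin (2 * m), u ∈ V ↔ elemAt i u ∈ B := by
      intro u; simp [hV_def]
    have haV : a ∈ V := (hmemV a).2 haB
    have hVrange : ∀ u ∈ V, 2 * k.val + 1 ≤ u.val ∧ u.val ≤ 2 * l.val := by
      intro u hu
      obtain ⟨u', h1, h2, h3⟩ := hBsub _ ((hmemV u).1 hu)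
      have he : u = u' := elemAt_inj h3
      rw [he]; exact ⟨h1, h2⟩
    have hVim : V.image (elemAt i) = B := by
      apply Finset.Subset.antisymm
      · intro x hx
        obtain ⟨u, hu, rfl⟩ := Finset.mem_image.1 hx
        exact (hmemV u).1 hu
      · intro x hx
        obtain ⟨u', _, _, hx'⟩ := hBsub x hx
        rw [hx']
        exact Finset.mem_image_of_mem _ ((hmemV u').2 (hx' ▸ hx))
    have hVcard : V.card = B.card := by
      rw [← hVim]; exact (Finset.card_image_of_injective V elemAt_inj).symm
    have hBeven : Even B.card := heven B hB
    have hBcard2 : 2 ≤ B.card := by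
      have h1 : 0 < B.card := Finset.card_pos.2 ⟨_, haB⟩
      rcases hBeven with ⟨c, hc⟩; omega
    have hVne : V.Nonempty := ⟨a, haV⟩
    set v := V.max' hVne with hv_def
    have hvV : v ∈ V := V.max'_mem hVne
    have hvB : elemAt i v ∈ B := (hmemV v).1 hvV
    have hvle : v.val ≤ 2 * l.val := (hVrange v hvV).2
    have hav_le : a.val ≤ v.val := (hVrange v hvV).1
    have hav_lt : a.val < v.val := by
      rcases Nat.lt_or_ge a.val v.val with h | h
      · exact h
      · exfalso
        have hsub : V ⊆ {a} := by
          intro u hu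
          have h1 := (hVrange u hu).1
          have h2 := Fin.le_def.1 (V.le_max' u hu)
          have : u = a := Fin.ext (by omega)
          simp [this]
        have hle1 := Finset.card_le_card hsub
        simp at hle1
        omega
    set W : Finset (Fin (2 * m)) := Finset.Ioo a v with hW_def
    have hWcard : W.card = v.val - a.val - 1 := Fin.card_Ioo a v
    have hWeven : Even W.card := by
      have hWun : W = π.parts.biUnion (fun p => W.filter (fun u => elemAt i u ∈ p)) := by
        apply Finset.Subset.antisymm
        · intro u hu
          obtain ⟨p, hp, hup⟩ := π.exists_mem (Finset.mem_univ (elemAt i u))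
          exact Finset.mem_biUnion.2 ⟨p, hp, Finset.mem_filter.2 ⟨hu, hup⟩⟩
        · intro u hu
          obtain ⟨p, hp, hup⟩ := Finset.mem_biUnion.1 hu
          exact (Finset.mem_filter.1 hup).1
      rw [hWun, Finset.card_biUnion (by
        intro p hp q hq hpq
        simp only [Finset.disjoint_left]
        intro u hu1 hu2
        exact hpq (π.eq_of_mem_parts hp hq (Finset.mem_filter.1 hu1).2
          (Finset.mem_filter.1 hu2).2))]
      apply Finset.sum_induction _ Even (fun x y => Even.add) Even.zero
      intro p hp
      by_cases hpB : p = B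
      · subst hpB
        have hvea : v ∈ V.erase a := Finset.mem_erase.2
          ⟨fun h => by rw [h] at hav_lt; omega, hvV⟩
        have hset : W.filter (fun u => elemAt i u ∈ p) = (V.erase a).erase v := by
          ext u
          rw [Finset.mem_filter, Finset.mem_erase, Finset.mem_erase, hW_def, Finset.mem_Ioo]
          constructor
          · rintro ⟨⟨h1, h2⟩, h3⟩
            exact ⟨Fin.ne_of_lt h2, Fin.ne_of_gt h1, (hmemV u).2 h3⟩
          · rintro ⟨h1, h2, h3⟩
            have h4 := (hVrange u h3).1
            have h5 := V.le_max' u h3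
            refine ⟨⟨?_, lt_of_le_of_ne h5 h1⟩, (hmemV u).1 h3⟩
            refine lt_of_le_of_ne (Fin.le_def.2 (by omega)) (Ne.symm h2)
        rw [hset, Finset.card_erase_of_mem hvea, Finset.card_erase_of_mem haV, hVcard]
        rw [Nat.even_iff] at hBeven ⊢
        omega
      · rcases Finset.eq_empty_or_nonempty (W.filter (fun u => elemAt i u ∈ p)) with he | hne
        · rw [he]; simp
        · obtain ⟨u0, hu0⟩ := hne
          have hu0W : u0 ∈ W := (Finset.mem_filter.1 hu0).1
          have hu0p : elemAt i u0 ∈ p := (Finset.mem_filter.1 hu0).2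
          have hu0ab : a < u0 ∧ u0 < v := Finset.mem_Ioo.1 (by rwa [hW_def] at hu0W)
          have hu0a : a.val < u0.val := Fin.lt_def.1 hu0ab.1
          have hu0v : u0.val < v.val := Fin.lt_def.1 hu0ab.2
          have hpsub : ∀ x ∈ p, ∃ w : Fin (2 * m), a < w ∧ w < v ∧ x = elemAt i w := by
            intro x hx
            have hsb : SameBlock π (elemAt i u0) x := ⟨p, hp, hu0p, hx⟩
            obtain ⟨w, hw1, hw2, hxw⟩ := closed u0 (by omega) (by omega) x hsb
            have hwp : elemAt i w ∈ p := hxw ▸ hx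
            have hwnB : elemAt i w ∉ B := fun hwB =>
              hpB (π.eq_of_mem_parts hp hB hwp hwB)
            have hwa : a.val < w.val := by
              rcases Nat.lt_or_ge a.val w.val with h | h
              · exact h
              · exfalso
                have : w = a := Fin.ext (by omega)
                rw [this] at hwnB
                exact hwnB haB
            have hwv : w.val < v.val := by
              rcases Nat.lt_or_ge w.val v.val with h | h
              · exact h
              · exfalso
                rcases Nat.eq_or_lt_of_le h with h' | h'
                · have : w = v := Fin.ext h'.symm
                  rw [this] at hwnB
                  exact hwnB hvB
                · have hcross := hnc (elemAt i a) (elemAt i u0) (elemAt i v) (elemAt i w)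
                    (Fin.lt_def.2 (elemAt_lt_elemAt hu0a))
                    (Fin.lt_def.2 (elemAt_lt_elemAt hu0v))
                    (Fin.lt_def.2 (elemAt_lt_elemAt h'))
                    ⟨B, hB, haB, hvB⟩ ⟨p, hp, hu0p, hwp⟩
                  obtain ⟨q, hq, hq1, hq2⟩ := hcross
                  have hqB : q = B := π.eq_of_mem_parts hq hB hq1 haB
                  have hu0B : elemAt i u0 ∈ B := hqB ▸ hq2
                  exact hpB (π.eq_of_mem_parts hp hB hu0p hu0B)
            exact ⟨w, Fin.lt_def.2 hwa, Fin.lt_def.2 hwv, hxw⟩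
          have hpeq : p = (W.filter (fun u => elemAt i u ∈ p)).image (elemAt i) := by
            apply Finset.Subset.antisymm
            · intro x hx
              obtain ⟨w, hw1, hw2, hxw⟩ := hpsub x hx
              rw [hxw]
              refine Finset.mem_image_of_mem _ (Finset.mem_filter.2 ⟨?_, hxw ▸ hx⟩)
              rw [hW_def]
              exact Finset.mem_Ioo.2 ⟨hw1, hw2⟩
            · intro x hx
              obtain ⟨u, hu, hux⟩ := Finset.mem_image.1 hx
              rw [← hux]
              exact (Finset.mem_filter.1 hu).2
          have hcard : p.card = (W.filter (fun u => elemAt i u ∈ p)).card := by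
            conv_lhs => rw [hpeq]
            rw [Finset.card_image_of_injective _ elemAt_inj]
          rw [← hcard]
          exact heven p hp
    have hveven : v.val % 2 = 0 := by
      rw [hWcard, Nat.even_iff] at hWeven
      omega
    have humlt : v.val / 2 < m := by omega
    set u1 : Fin m := ⟨v.val / 2, humlt⟩ with hu1_def
    have hu1val : u1.val = v.val / 2 := rfl
    rcases Nat.eq_or_lt_of_le hvle with heq | hlt2
    · exact Relation.EqvGen.rel k l ⟨a, v, Or.inr haval, Or.inl (by omega),
        ⟨B, hB, haB, hvB⟩⟩
    · have hu1k : k.val < u1.val := by omega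
      have hu1l : u1.val < l.val := by omega
      have closed' : ∀ u : Fin (2 * m), 2 * u1.val + 1 ≤ u.val → u.val ≤ 2 * l.val →
          ∀ x, SameBlock π (elemAt i u) x →
            ∃ u' : Fin (2 * m), 2 * u1.val + 1 ≤ u'.val ∧ u'.val ≤ 2 * l.val ∧
              x = elemAt i u' := by
        intro u hu1' hu2' x hsb
        have huv : v.val < u.val := by omega
        obtain ⟨u', h1, h2, hxu'⟩ := closed u (by omega) hu2' x hsb
        refine ⟨u', ?_, h2, hxu'⟩
        by_contra hcon
        push_neg at hcon
        have hu'v : u'.val ≤ v.val := by omega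
        obtain ⟨q, hq, hq1, hq2⟩ := hsb
        have hq2' : elemAt i u' ∈ q := hxu' ▸ hq2
        by_cases hu'B : elemAt i u' ∈ B
        · have hqB : q = B := π.eq_of_mem_parts hq hB hq2' hu'B
          have huV : u ∈ V := (hmemV u).2 (hqB ▸ hq1)
          have := Fin.le_def.1 (V.le_max' u huV)
          omega
        · have hu'a : a.val < u'.val := by
            rcases Nat.lt_or_ge a.val u'.val with h | h
            · exact h
            · exfalso
              have : u' = a := Fin.ext (by omega)
              rw [this] at hu'B
              exact hu'B haB
          have hu'v' : u'.val < v.val := by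
            rcases Nat.eq_or_lt_of_le hu'v with h | h
            · exfalso
              have : u' = v := Fin.ext h
              rw [this] at hu'B
              exact hu'B hvB
            · exact h
          have hcross := hnc (elemAt i a) (elemAt i u') (elemAt i v) (elemAt i u)
            (Fin.lt_def.2 (elemAt_lt_elemAt hu'a))
            (Fin.lt_def.2 (elemAt_lt_elemAt hu'v'))
            (Fin.lt_def.2 (elemAt_lt_elemAt huv))
            ⟨B, hB, haB, hvB⟩ ⟨q, hq, hq2', hq1⟩
          obtain ⟨r, hr, hr1, hr2⟩ := hcross
          have hrB : r = B := π.eq_of_mem_parts hr hB hr1 haB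
          exact hu'B (hrB ▸ hr2)
      have htail := ih u1 l (by omega) hu1l closed'
      exact Relation.EqvGen.trans _ _ _
        (Relation.EqvGen.rel k u1 ⟨a, v, Or.inr haval, Or.inl (by omega),
          ⟨B, hB, haB, hvB⟩⟩) htail

lemma main_rel (d m : ℕ) (hd : 0 < d)
    (π : Finpartition (Finset.univ : Finset (Fin (2 * d * m))))
    (hnc : IsNonCrossing π) (heven : ∀ b ∈ π.parts, Even b.card)
    (hlabel : ∀ x y : Fin (2 * d * m), SameBlock π x y → label d x = label d y)
    (i j : Fin d) (hij : i < j) (k l : Fin m) (hkl : k.val < l.val)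
    (s t : Fin (2 * m))
    (hs : s.val = 2 * k.val ∨ s.val = 2 * k.val + 1)
    (ht : t.val = 2 * l.val ∨ t.val = 2 * l.val + 1)
    (hsb : SameBlock π (elemAt j s) (elemAt j t)) :
    PhiRestRel π i k l := by
  have hijv : i.val < j.val := Fin.lt_def.1 hij
  apply key d m hd π hnc heven i (l.val - k.val) k l (le_refl _) hkl
  intro u hu1 hu2 x hsbx
  have hlx : label d x.val = i.val := by
    have h1 := hlabel (elemAt i u) x hsbx
    rw [label_elemAt hd] at h1
    exact h1.symm
  obtain ⟨u', rfl⟩ := eq_elemAt_of_label hd i x hlx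
  have hXu : (elemAt j s).val < (elemAt i u).val := by
    rcases Nat.lt_or_ge s.val u.val with h | h
    · exact elemAt_lt_elemAt h
    · have hus : u.val = s.val := by omega
      have hsodd : s.val % 2 = 1 := by omega
      have heq : u = s := Fin.ext hus
      rw [heq]
      exact elemAt_lt_same_odd hsodd hijv
  have huY : (elemAt i u).val < (elemAt j t).val := by
    rcases Nat.lt_or_ge u.val t.val with h | h
    · exact elemAt_lt_elemAt h
    · have hut : u.val = t.val := by omega
      have hteven : t.val % 2 = 0 := by omega
      have heq : u = t := Fin.ext hut
      rw [heq]
      exact elemAt_lt_same_even hteven hijv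
  have hnXu : ¬ SameBlock π (elemAt j s) (elemAt i u) := by
    intro h
    have h2 := hlabel _ _ h
    rw [label_elemAt hd, label_elemAt hd] at h2
    omega
  have henc := enclose hnc hsb (Fin.lt_def.2 hXu) (Fin.lt_def.2 huY) hnXu hsbx
  have hX' : (elemAt j s).val < (elemAt i u').val := Fin.lt_def.1 henc.1
  have hY' : (elemAt i u').val < (elemAt j t).val := Fin.lt_def.1 henc.2
  refine ⟨u', ?_, ?_, rfl⟩
  · rcases Nat.lt_or_ge s.val u'.val with h | h
    · omega
    · have h1 : u'.val = s.val := by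
        rcases Nat.lt_or_ge u'.val s.val with h' | h'
        · have := elemAt_lt_elemAt (i := i) (i' := j) h'
          omega
        · omega
      have hsodd : s.val % 2 = 1 := by
        by_contra hpar
        have hse : s.val % 2 = 0 := by omega
        have heq : u' = s := Fin.ext h1
        rw [heq] at hX'
        have := elemAt_lt_same_even (i := i) (j := j) hse hijv
        omega
      omega
  · rcases Nat.lt_or_ge u'.val t.val with h | h
    · omega
    · have h1 : u'.val = t.val := by
        rcases Nat.lt_or_ge t.val u'.val with h' | h'
        · have := elemAt_lt_elemAt (i := j) (i' := i) h'
          omega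
        · omega
      have hteven : t.val % 2 = 0 := by
        by_contra hpar
        have hto : t.val % 2 = 1 := by omega
        have heq : u' = t := Fin.ext h1
        rw [heq] at hY'
        have := elemAt_lt_same_odd (i := i) (j := j) hto hijv
        omega
      omega


/-- For `π ∈ NC*(d,m)` (non-crossing, even blocks, finer than the label partition
`{A₁,...,A_d}`), the map `P(π) = (Φ(π|_{A₁}),...,Φ(π|_{A_d}))` is a non-decreasing
chain: for `i < j`, the partition `Φ(π|_{A_j})` is finer than `Φ(π|_{A_i})`. -/
theorem PhiRest_monotone (d m : ℕ) (hd : 0 < d) (hm : 0 < m)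
    (π : Finpartition (Finset.univ : Finset (Fin (2 * d * m))))
    (hnc : IsNonCrossing π) (heven : ∀ b ∈ π.parts, Even b.card)
    (hlabel : ∀ i j : Fin (2 * d * m), SameBlock π i j → label d i = label d j) :
    ∀ i j : Fin d, i < j → ∀ k l : Fin m, PhiRestRel π j k l → PhiRestRel π i k l := by
  intro i j hij k l h
  unfold PhiRestRel at h
  induction h with
  | rel x y hxy =>
    obtain ⟨s, t, hs, ht, hsb⟩ := hxy
    rcases lt_trichotomy x.val y.val with hlt | heq | hgt
    · exact main_rel d m hd π hnc heven hlabel i j hij x y hlt s t hs ht hsb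
    · have hxy' : x = y := Fin.ext heq
      rw [hxy']
      exact Relation.EqvGen.refl y
    · exact Relation.EqvGen.symm _ _
        (main_rel d m hd π hnc heven hlabel i j hij y x hgt t s ht hs (sb_symm hsb))
  | refl x => exact Relation.EqvGen.refl x
  | symm x y _ ih => exact Relation.EqvGen.symm x y ih
  | trans x y z _ _ ih1 ih2 => exact Relation.EqvGen.trans x y z ih1 ih2
end

section
/- Let m ≥ 1, let π ∈ NC*(1,m) (a non-crossing partition of [2m] with all blocks of even size), and let k ∈ [2m]. Then B(π) − 1, where B(π) is the number of blocks of the quotient partition Φ(π) of [m], equals the number of odd elements l ∈ [2m] \ {k} such that every element l′ of the block π(l) satisfies l ≤ l′ < k in the cyclic order starting at l. -/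
open Classical

/-- The 0-indexed element of `[2m]` corresponding to the 1-based element `2k−1`. -/
def dbl {m : ℕ} (k : Fin m) : Fin (2 * m) := ⟨2 * k.val, by have := k.isLt; omega⟩

/-- The 0-indexed element of `[2m]` corresponding to the 1-based element `2k`. -/
def dbl' {m : ℕ} (k : Fin m) : Fin (2 * m) := ⟨2 * k.val + 1, by have := k.isLt; omega⟩

/-- The relation on `[m]` generating `Φ(π)`: `k` and `l` are related if some element of
`{2k−1, 2k}` is `π`-equivalent to some element of `{2l−1, 2l}`. -/
def phiBase {m : ℕ} (π : Finpartition (Finset.univ : Finset (Fin (2 * m))))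
    (k l : Fin m) : Prop :=
  SameBlock π (dbl k) (dbl l) ∨ SameBlock π (dbl k) (dbl' l) ∨
    SameBlock π (dbl' k) (dbl l) ∨ SameBlock π (dbl' k) (dbl' l)

/-- `B(π)`: the number of blocks of the quotient partition `Φ(π)` of `[m]`. -/
noncomputable def numPhiBlocks {m : ℕ}
    (π : Finpartition (Finset.univ : Finset (Fin (2 * m)))) : ℕ :=
  Nat.card (Quotient (Relation.EqvGen.setoid (phiBase π)))

open Finset

namespace NCaux

variable {m : ℕ}

lemma sub_val (hm : 0 < m) (a b : Fin (2*m)) :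
    (b - a).val = if a.val ≤ b.val then b.val - a.val else b.val + 2*m - a.val := by
  have ha := a.isLt; have hb := b.isLt
  rw [Fin.sub_def]
  show (2*m - a.val + b.val) % (2*m) = _
  split
  · have h : (2*m - a.val + b.val) = (b.val - a.val) + 2*m := by omega
    rw [h, Nat.add_mod_right, Nat.mod_eq_of_lt (by omega)]
  · rw [Nat.mod_eq_of_lt (by omega)]; omega

lemma delta_add (hm : 0 < m) (a b c : Fin (2*m)) :
    (b - a).val + (c - b).val = (c - a).val ∨
      (b - a).val + (c - b).val = (c - a).val + 2*m := by
  have ha := a.isLt; have hb := b.isLt; have hc := c.isLt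
  rw [sub_val hm, sub_val hm, sub_val hm]
  split_ifs <;> omega

lemma delta_eq_zero (hm : 0 < m) {a b : Fin (2*m)} : (b - a).val = 0 ↔ b = a := by
  have ha := a.isLt; have hb := b.isLt
  rw [sub_val hm]
  constructor
  · intro h; split_ifs at h <;> (apply Fin.ext; omega)
  · rintro rfl; split_ifs <;> omega

lemma delta_inj (hm : 0 < m) {a b c : Fin (2*m)} (h : (b - a).val = (c - a).val) : b = c := by
  have ha := a.isLt; have hb := b.isLt; have hc := c.isLt
  rw [sub_val hm, sub_val hm] at h
  apply Fin.ext; split_ifs at h <;> omega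

def Cross4 (i j k l : Fin (2*m)) : Prop :=
  0 < (j - i).val ∧ (j - i).val < (k - i).val ∧ (k - i).val < (l - i).val

lemma cross4_rot (hm : 0 < m) {i j k l : Fin (2*m)} (h : Cross4 i j k l) :
    Cross4 j k l i := by
  obtain ⟨h1, h2, h3⟩ := h
  have A := delta_add hm i j k
  have B := delta_add hm i j l
  have C := delta_add hm i j i
  have hii : (i - i).val = 0 := by rw [sub_val hm]; simp
  rw [hii] at C
  have b1 := (k - j).isLt; have b2 := (l - j).isLt; have b3 := (i - j).isLt
  have b4 := (k - i).isLt; have b5 := (l - i).isLt; have b6 := (j - i).isLt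
  rcases A with A | A <;> rcases B with B | B <;> rcases C with C | C <;>
    exact ⟨by omega, by omega, by omega⟩

lemma cross4_of_chain (hm : 0 < m) {o i j k l : Fin (2*m)}
    (h1 : (i - o).val < (j - o).val) (h2 : (j - o).val < (k - o).val)
    (h3 : (k - o).val < (l - o).val) : Cross4 i j k l := by
  have A := delta_add hm o i j
  have B := delta_add hm o i k
  have C := delta_add hm o i l
  have b1 := (j - i).isLt; have b2 := (k - i).isLt; have b3 := (l - i).isLt
  have b4 := (i - o).isLt; have b5 := (j - o).isLt; have b6 := (k - o).isLt
  have b7 := (l - o).isLt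
  rcases A with A | A <;> rcases B with B | B <;> rcases C with C | C <;>
    exact ⟨by omega, by omega, by omega⟩

lemma cross4_cases (hm : 0 < m) (o : Fin (2*m)) {i j k l : Fin (2*m)}
    (h : Cross4 i j k l) :
    ((i-o).val < (j-o).val ∧ (j-o).val < (k-o).val ∧ (k-o).val < (l-o).val) ∨
    ((j-o).val < (k-o).val ∧ (k-o).val < (l-o).val ∧ (l-o).val < (i-o).val) ∨
    ((k-o).val < (l-o).val ∧ (l-o).val < (i-o).val ∧ (i-o).val < (j-o).val) ∨
    ((l-o).val < (i-o).val ∧ (i-o).val < (j-o).val ∧ (j-o).val < (k-o).val) := by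
  obtain ⟨h1, h2, h3⟩ := h
  have A := delta_add hm o i j
  have B := delta_add hm o i k
  have C := delta_add hm o i l
  have b1 := (j - i).isLt; have b2 := (k - i).isLt; have b3 := (l - i).isLt
  have b4 := (i - o).isLt; have b5 := (j - o).isLt; have b6 := (k - o).isLt
  have b7 := (l - o).isLt
  rcases A with A | A <;> rcases B with B | B <;> rcases C with C | C <;> omega


-- begin chunk 2

def NCc (r : Fin (2*m) → Fin (2*m) → Prop) : Prop :=
  ∀ i j k l : Fin (2*m), Cross4 i j k l → r i k → r j l → r i j

noncomputable def cls (r : Fin (2*m) → Fin (2*m) → Prop) (x : Fin (2*m)) :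
    Finset (Fin (2*m)) := univ.filter (fun y => r x y)

lemma mem_cls {r : Fin (2*m) → Fin (2*m) → Prop} {x y : Fin (2*m)} :
    y ∈ cls r x ↔ r x y := by simp [cls]

lemma cls_closed_even {r : Fin (2*m) → Fin (2*m) → Prop} (hr : Equivalence r)
    (heven : ∀ x, Even (cls r x).card) (S : Finset (Fin (2*m))) :
    (∀ x ∈ S, cls r x ⊆ S) → Even S.card := by
  induction S using Finset.strongInduction with
  | _ S ih =>
    intro hS
    rcases S.eq_empty_or_nonempty with rfl | ⟨x, hx⟩
    · simp
    · have hsub : cls r x ⊆ S := hS x hx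
      have hxc : x ∈ cls r x := mem_cls.2 (hr.refl x)
      have h1 : S \ cls r x ⊂ S :=
        Finset.sdiff_ssubset hsub ⟨x, hxc⟩
      have h2 : Even (S \ cls r x).card := by
        apply ih _ h1
        intro y hy
        have hyS := (Finset.mem_sdiff.1 hy).1
        have hyx : ¬ r x y := fun h => (Finset.mem_sdiff.1 hy).2 (mem_cls.2 h)
        intro z hz
        rw [Finset.mem_sdiff]
        refine ⟨hS y hyS (mem_cls.2 (mem_cls.1 hz)), fun hzx => ?_⟩
        exact hyx (hr.trans (mem_cls.1 hzx) (hr.symm (mem_cls.1 hz)))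
      have h3 : (S \ cls r x).card = S.card - (cls r x).card :=
        Finset.card_sdiff_of_subset hsub
      have h4 : (cls r x).card ≤ S.card := Finset.card_le_card hsub
      obtain ⟨p, hp⟩ := h2
      obtain ⟨q, hq⟩ := heven x
      exact ⟨p + q, by omega⟩

lemma natCard_quotient_eq {α : Type*} [Fintype α] (St : Setoid α) (A : Finset α)
    (h1 : ∀ x : α, ∃ a ∈ A, St.r a x)
    (h2 : ∀ a ∈ A, ∀ b ∈ A, St.r a b → a = b) :
    Nat.card (Quotient St) = A.card := by
  have hbij : Function.Bijective (fun a : A => (Quotient.mk St a.1)) := by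
    constructor
    · rintro ⟨a, ha⟩ ⟨b, hb⟩ hab
      have := Quotient.exact hab
      exact Subtype.ext (h2 a ha b hb this)
    · intro q
      induction q using Quotient.ind with
      | _ x =>
        obtain ⟨a, ha, hax⟩ := h1 x
        exact ⟨⟨a, ha⟩, Quotient.sound hax⟩
  rw [← Nat.card_eq_finsetCard]
  exact (Nat.card_eq_of_bijective _ hbij).symm

lemma cond_iff (hm : 0 < m) {r : Fin (2*m) → Fin (2*m) → Prop} (hr : Equivalence r)
    (k l : Fin (2*m)) :
    (∀ l', r l l' → (l' - l).val < (k - l).val) ↔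
      (l ≠ k ∧ ∀ l', r l l' → (l - k).val ≤ (l' - k).val) := by
  have hkl := delta_add hm k l k
  have hkk : (k - k).val = 0 := delta_eq_zero hm |>.2 rfl
  have hll : (l - l).val = 0 := delta_eq_zero hm |>.2 rfl
  constructor
  · intro h
    have h0 := h l (hr.refl l)
    rw [hll] at h0
    have hlk : l ≠ k := by
      intro he; rw [he] at h0; rw [hkk] at h0; omega
    refine ⟨hlk, fun l' hl' => ?_⟩
    have h1 := h l' hl'
    have h2 := delta_add hm k l l'
    have b1 := (l - k).isLt; have b2 := (l' - k).isLt
    have b3 := (k - l).isLt; have b4 := (l' - l).isLt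
    rw [hkk] at hkl
    omega
  · rintro ⟨hlk, h⟩ l' hl'
    have h1 := h l' hl'
    have h2 := delta_add hm k l l'
    have b1 := (l - k).isLt; have b2 := (l' - k).isLt
    have b3 := (k - l).isLt; have b4 := (l' - l).isLt
    have hne : (l - k).val ≠ 0 := fun h0 => hlk (delta_inj hm (h0.trans hkk.symm))
    rw [hkk] at hkl
    omega


-- chunk 3

lemma sb_refl {N : ℕ} (π : Finpartition (Finset.univ : Finset (Fin N))) (i : Fin N) :
    SameBlock π i i := by
  obtain ⟨t, ht, hit⟩ := π.exists_mem (Finset.mem_univ i)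
  exact ⟨t, ht, hit, hit⟩

lemma sb_symm {N : ℕ} {π : Finpartition (Finset.univ : Finset (Fin N))} {i j : Fin N}
    (h : SameBlock π i j) : SameBlock π j i := by
  obtain ⟨t, ht, hit, hjt⟩ := h; exact ⟨t, ht, hjt, hit⟩

lemma sb_trans {N : ℕ} {π : Finpartition (Finset.univ : Finset (Fin N))} {i j k : Fin N}
    (h1 : SameBlock π i j) (h2 : SameBlock π j k) : SameBlock π i k := by
  obtain ⟨t, ht, hit, hjt⟩ := h1
  obtain ⟨u, hu, hju, hku⟩ := h2
  have : t = u := π.eq_of_mem_parts ht hu hjt hju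
  exact ⟨t, ht, hit, this ▸ hku⟩

lemma sb_equiv {N : ℕ} (π : Finpartition (Finset.univ : Finset (Fin N))) :
    Equivalence (SameBlock π) :=
  ⟨sb_refl π, sb_symm, sb_trans⟩

lemma cross4_linear (hm : 0 < m) {i j k l : Fin (2*m)} (h : Cross4 i j k l)
    (h1 : i.val ≤ j.val) (h2 : i.val ≤ k.val) (h3 : i.val ≤ l.val) :
    i < j ∧ j < k ∧ k < l := by
  obtain ⟨c1, c2, c3⟩ := h
  simp only [sub_val hm] at c1 c2 c3
  have bi := i.isLt; have bj := j.isLt; have bk := k.isLt; have bl := l.isLt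
  refine ⟨?_, ?_, ?_⟩ <;> rw [Fin.lt_def] <;> split_ifs at c1 c2 c3 <;> omega

lemma ncc_of_nc (hm : 0 < m) (π : Finpartition (Finset.univ : Finset (Fin (2*m))))
    (hnc : IsNonCrossing π) : NCc (SameBlock π) := by
  have H : ∀ i j k l : Fin (2*m), Cross4 i j k l →
      i.val ≤ j.val → i.val ≤ k.val → i.val ≤ l.val →
      SameBlock π i k → SameBlock π j l → SameBlock π i j := by
    intro i j k l hc h1 h2 h3 hik hjl
    obtain ⟨o1, o2, o3⟩ := cross4_linear hm hc h1 h2 h3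
    exact hnc i j k l o1 o2 o3 hik hjl
  intro i j k l hc hik hjl
  have hcase : (i.val ≤ j.val ∧ i.val ≤ k.val ∧ i.val ≤ l.val) ∨
      (j.val ≤ k.val ∧ j.val ≤ l.val ∧ j.val ≤ i.val) ∨
      (k.val ≤ l.val ∧ k.val ≤ i.val ∧ k.val ≤ j.val) ∨
      (l.val ≤ i.val ∧ l.val ≤ j.val ∧ l.val ≤ k.val) := by omega
  rcases hcase with ⟨h1, h2, h3⟩ | ⟨h1, h2, h3⟩ | ⟨h1, h2, h3⟩ | ⟨h1, h2, h3⟩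
  · exact H i j k l hc h1 h2 h3 hik hjl
  · have hc' := cross4_rot hm hc
    have := H j k l i hc' h1 h2 h3 hjl (sb_symm hik)
    -- this : SameBlock j k ; want i j : i ~ k ~ j
    exact sb_trans hik (sb_symm this)
  · have hc' := cross4_rot hm (cross4_rot hm hc)
    have := H k l i j hc' h1 h2 h3 (sb_symm hik) (sb_symm hjl)
    -- this : SameBlock k l; i ~ k ~ l ~ j
    exact sb_trans hik (sb_trans this (sb_symm hjl))
  · have hc' := cross4_rot hm (cross4_rot hm (cross4_rot hm hc))
    have := H l i j k hc' h1 h2 h3 (sb_symm hjl) hik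
    -- this : SameBlock l i ; i ~ l ~ j
    exact sb_trans (sb_symm this) (sb_symm hjl)


section Merge

variable {r : Fin (2*m) → Fin (2*m) → Prop}

/-- The "gap" structure: `s`, the first element of the block of `a` strictly after `a'`,
comes after every element of the block of `a'`, and `(s - a').val` is even. -/
lemma exists_gap (hm : 0 < m) (hr : Equivalence r) (hnc : NCc r)
    (heven : ∀ x, Even (cls r x).card) {a a' : Fin (2*m)}
    (ha' : a'.val = a.val + 1) (hne : ¬ r a a') :
    ∃ s : Fin (2*m), r a s ∧ 1 ≤ (s - a').val ∧ (s - a').val ≤ 2*m - 2 ∧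
      Even ((s - a').val) ∧
      (∀ x, r a x → (s - a').val ≤ (x - a').val) ∧
      (∀ y, r a' y → (y - a').val < (s - a').val) := by
  haveI : NeZero (2*m) := ⟨by omega⟩
  have hba := a.isLt; have hba' := a'.isLt
  have haa1 : (a' - a).val = 1 := by rw [sub_val hm]; split_ifs <;> omega
  have haa2 : (a - a').val = 2*m - 1 := by rw [sub_val hm]; split_ifs <;> omega
  obtain ⟨s, hs, hsmin⟩ := Finset.exists_min_image (cls r a)
    (fun z => (z - a').val) ⟨a, mem_cls.2 (hr.refl a)⟩
  have hs' : r a s := mem_cls.1 hs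
  -- the block of a has at least two elements
  have hcard : 1 < (cls r a).card := by
    rcases Nat.lt_or_ge 1 (cls r a).card with h | h
    · exact h
    · exfalso
      have h1 : 0 < (cls r a).card := Finset.card_pos.2 ⟨a, mem_cls.2 (hr.refl a)⟩
      obtain ⟨t, ht⟩ := heven a
      omega
  obtain ⟨z1, hz1, z2, hz2, hz12⟩ := Finset.one_lt_card.1 hcard
  -- some element z ≠ a in the block of a
  have hzex : ∃ z ∈ cls r a, z ≠ a := by
    by_cases h : z1 = a
    · exact ⟨z2, hz2, by rw [← h]; exact fun e => hz12 e.symm⟩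
    · exact ⟨z1, hz1, h⟩
  obtain ⟨z, hz, hzne⟩ := hzex
  have hzval : (z - a').val ≤ 2*m - 2 := by
    have h1 : (z - a').val ≠ 2*m - 1 := by
      intro h; exact hzne (delta_inj hm (h.trans haa2.symm))
    have := (z - a').isLt; omega
  have hsu : (s - a').val ≤ 2*m - 2 := le_trans (hsmin z hz) hzval
  have hsa' : s ≠ a' := fun h => hne (h ▸ hs')
  have hs1 : 1 ≤ (s - a').val := by
    have : (s - a').val ≠ 0 := fun h => hsa' (delta_eq_zero hm |>.1 h)
    omega
  -- distance from a along the circle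
  have hda : ∀ x : Fin (2*m), x ≠ a → (x - a).val = 1 + (x - a').val := by
    intro x hx
    have h1 := delta_add hm a a' x
    have h2 : (x - a').val ≤ 2*m - 2 := by
      have : (x - a').val ≠ 2*m - 1 := fun h => hx (delta_inj hm (h.trans haa2.symm))
      have := (x - a').isLt; omega
    have := (x - a).isLt
    omega
  have hgap : ∀ y, r a' y → (y - a').val < (s - a').val := by
    intro y hy
    by_contra hcon
    push_neg at hcon
    have hys : y ≠ s := by
      intro h; rw [h] at hy; exact hne (hr.trans hs' (hr.symm hy))
    have hlt : (s - a').val < (y - a').val := by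
      rcases Nat.lt_or_ge (s - a').val (y - a').val with h | h
      · exact h
      · exact absurd (delta_inj hm (le_antisymm h hcon : (y - a').val = (s - a').val)) hys
    have hya : y ≠ a := by
      intro h; rw [h] at hy; exact hne (hr.symm hy)
    have hsna : s ≠ a := by
      intro h; rw [h, haa2] at hsu; omega
    have hds : (s - a).val = 1 + (s - a').val := hda s hsna
    have hdy : (y - a).val = 1 + (y - a').val := hda y hya
    have h0 : (a - a).val = 0 := delta_eq_zero hm |>.2 rfl
    have hc : Cross4 a a' s y := by
      apply cross4_of_chain hm (o := a) <;> omega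
    exact hne (hnc a a' s y hc hs' hy)
  -- parity of (s - a').val
  have hparity : Even ((s - a').val) := by
    set S : Finset (Fin (2*m)) :=
      univ.filter (fun x => (x - a').val < (s - a').val) with hS
    have hmemS : ∀ x : Fin (2*m), x ∈ S ↔ (x - a').val < (s - a').val := by
      intro x; simp [hS]
    have hcardS : S.card = (s - a').val := by
      apply Finset.card_eq_of_bijective
        (fun i hi => a' + (⟨i, by omega⟩ : Fin (2*m)))
      · intro x hx
        refine ⟨(x - a').val, (hmemS x).1 hx, ?_⟩
        have : (⟨(x - a').val, by omega⟩ : Fin (2*m)) = x - a' := Fin.eta _ _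
        rw [this, add_comm, sub_add_cancel]
      · intro i hi
        rw [hmemS]
        have : (a' + (⟨i, by omega⟩ : Fin (2*m)) - a') = (⟨i, by omega⟩ : Fin (2*m)) :=
          add_sub_cancel_left _ _
        rw [this]
        exact hi
      · intro i j hi hj hij
        have h1 : (a' + (⟨i, by omega⟩ : Fin (2*m)) - a') = (⟨i, by omega⟩ : Fin (2*m)) :=
          add_sub_cancel_left _ _
        have h2 : (a' + (⟨j, by omega⟩ : Fin (2*m)) - a') = (⟨j, by omega⟩ : Fin (2*m)) :=
          add_sub_cancel_left _ _
        have := congrArg (fun z => (z - a').val) hij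
        simp only [h1, h2] at this
        exact this
    have hclosed : ∀ x ∈ S, cls r x ⊆ S := by
      intro x hx z hz
      rw [hmemS] at hx ⊢
      have hxz : r x z := mem_cls.1 hz
      have hax : ¬ r a x := by
        intro h
        have := hsmin x (mem_cls.2 h)
        omega
      by_cases hax' : r a' x
      · exact hgap z (hr.trans hax' hxz)
      · by_contra hcon
        push_neg at hcon
        have hzs : z ≠ s := by
          intro h; rw [h] at hxz; exact hax (hr.trans hs' (hr.symm hxz))
        have hlt : (s - a').val < (z - a').val := by
          rcases Nat.lt_or_ge (s - a').val (z - a').val with h | h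
          · exact h
          · exact absurd (delta_inj hm (le_antisymm h hcon : (z - a').val = (s - a').val)) hzs
        have hxa : x ≠ a := fun h => hax (h ▸ hr.refl a)
        have hza : z ≠ a := by
          intro h; rw [h] at hxz; exact hax (hr.symm hxz)
        have hsna : s ≠ a := by
          intro h; rw [h, haa2] at hsu; omega
        have hdx : (x - a).val = 1 + (x - a').val := hda x hxa
        have hds : (s - a).val = 1 + (s - a').val := hda s hsna
        have hdz : (z - a).val = 1 + (z - a').val := hda z hza
        have h0 : (a - a).val = 0 := delta_eq_zero hm |>.2 rfl
        have hxa' : x ≠ a' := fun h => hax' (h ▸ hr.refl a')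
        have hx1 : 1 ≤ (x - a').val := by
          have : (x - a').val ≠ 0 := fun h => hxa' (delta_eq_zero hm |>.1 h)
          omega
        have hc : Cross4 a x s z := by
          apply cross4_of_chain hm (o := a) <;> omega
        exact hax (hnc a x s z hc hs' hxz)
    have := cls_closed_even hr heven S hclosed
    rwa [hcardS] at this
  exact ⟨s, hs', hs1, hsu, hparity, fun x hx => hsmin x (mem_cls.2 hx), hgap⟩

end Merge


-- chunk 5 : the merge-min trichotomy

lemma merge_min {r : Fin (2*m) → Fin (2*m) → Prop} (hm : 0 < m) (hr : Equivalence r)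
    (hnc : NCc r) (heven : ∀ x, Even (cls r x).card) {a a' : Fin (2*m)}
    (ha' : a'.val = a.val + 1) (hne : ¬ r a a') (k : Fin (2*m)) :
    ∃ u v : Fin (2*m), r a u ∧ r a' v ∧
      (∀ x, r a x → (u - k).val ≤ (x - k).val) ∧
      (∀ y, r a' y → (v - k).val ≤ (y - k).val) ∧
      (((u - k).val < (v - k).val ∧ v.val % 2 ≠ a.val % 2) ∨
       ((v - k).val < (u - k).val ∧ u.val % 2 ≠ a.val % 2)) := by
  obtain ⟨s, hsa, hs1, hs2, hsev, hsmin, hgap⟩ := exists_gap hm hr hnc heven ha' hne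
  obtain ⟨u, hu, humin⟩ := Finset.exists_min_image (cls r a)
    (fun z => (z - k).val) ⟨a, mem_cls.2 (hr.refl a)⟩
  obtain ⟨v, hv, hvmin⟩ := Finset.exists_min_image (cls r a')
    (fun z => (z - k).val) ⟨a', mem_cls.2 (hr.refl a')⟩
  have hu' : r a u := mem_cls.1 hu
  have hv' : r a' v := mem_cls.1 hv
  have humin' : ∀ x, r a x → (u - k).val ≤ (x - k).val :=
    fun x hx => humin x (mem_cls.2 hx)
  have hvmin' : ∀ y, r a' y → (v - k).val ≤ (y - k).val :=
    fun y hy => hvmin y (mem_cls.2 hy)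
  have huv : u ≠ v := by
    intro h; rw [h] at hu'; exact hne (hr.trans hu' (hr.symm hv'))
  have hpuv : (u - k).val ≠ (v - k).val := fun h => huv (delta_inj hm h)
  -- parity of s
  have hspar : s.val % 2 ≠ a.val % 2 := by
    have h1 := sub_val hm a' s
    have hb1 := s.isLt; have hb2 := a'.isLt; have hb3 := a.isLt
    rw [Nat.even_iff] at hsev
    split_ifs at h1 <;> omega
  have ha'par : a'.val % 2 ≠ a.val % 2 := by omega
  refine ⟨u, v, hu', hv', humin', hvmin', ?_⟩
  rcases Nat.lt_or_ge (u - k).val (v - k).val with hlt | hge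
  · -- show v = a'
    left
    refine ⟨hlt, ?_⟩
    have hva' : v = a' := by
      have hmin2 : (a' - k).val ≤ (v - k).val := by
        by_contra hcon
        push_neg at hcon
        -- there is y := v in cls a' with p y < p a'
        set y := v with hy
        have hyr : r a' y := hv'
        have hpy : (y - k).val < (a' - k).val := hcon
        -- arithmetic
        have E1 := delta_add hm a' k a'
        have E2 := delta_add hm a' k y
        have E3 := delta_add hm a' k u
        have hga'a' : (a' - a').val = 0 := delta_eq_zero hm |>.2 rfl
        have hgy : (y - a').val < (s - a').val := hgap y hyr
        have hgu : (s - a').val ≤ (u - a').val := hsmin u hu'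
        have b1 := (k - a').isLt; have b2 := (a' - k).isLt
        have b3 := (y - k).isLt; have b4 := (u - k).isLt
        have b5 := (y - a').isLt; have b6 := (u - a').isLt
        have b7 := (s - a').isLt
        -- p u < p v ≤ p y
        have hpu : (u - k).val < (y - k).val := lt_of_lt_of_le hlt (hvmin' y hyr)
        omega
      have := hvmin' a' (hr.refl a')
      exact delta_inj hm (le_antisymm this hmin2)
    rw [hva']; exact ha'par
  · -- (v - k).val < (u - k).val ; show u = s
    right
    have hlt : (v - k).val < (u - k).val := by omega
    refine ⟨hlt, ?_⟩
    have hus : u = s := by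
      have hmin2 : (s - k).val ≤ (u - k).val := by
        by_contra hcon
        push_neg at hcon
        -- x := u ∈ cls a with p x < p s
        have hpx : (u - k).val < (s - k).val := hcon
        have hqx : (s - a').val ≤ (u - a').val := hsmin u hu'
        have hxs : u ≠ s := by
          intro h; rw [h] at hpx; omega
        have hqx' : (s - a').val < (u - a').val := by
          rcases Nat.lt_or_ge (s - a').val (u - a').val with h | h
          · exact h
          · exact absurd (delta_inj hm (le_antisymm h hqx : (u - a').val = (s - a').val)) hxs
        have E1 := delta_add hm a' k u
        have E2 := delta_add hm a' k s
        have E3 := delta_add hm a' k v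
        have hgv : (v - a').val < (s - a').val := hgap v hv'
        have b1 := (k - a').isLt; have b2 := (u - k).isLt
        have b3 := (s - k).isLt; have b4 := (v - k).isLt
        have b5 := (u - a').isLt; have b6 := (s - a').isLt
        have b7 := (v - a').isLt
        omega
      have := humin' s hsa
      exact delta_inj hm (le_antisymm this hmin2)
    rw [hus]; exact hspar


-- chunk 6 : the merged relation

def mrg (r : Fin (2*m) → Fin (2*m) → Prop) (a a' : Fin (2*m))
    (x y : Fin (2*m)) : Prop :=
  r x y ∨ (r x a ∧ r a' y) ∨ (r x a' ∧ r a y)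

lemma mrg_le {r : Fin (2*m) → Fin (2*m) → Prop} {a a' x y : Fin (2*m)}
    (h : r x y) : mrg r a a' x y := Or.inl h

lemma mrg_equiv {r : Fin (2*m) → Fin (2*m) → Prop} (hr : Equivalence r)
    (a a' : Fin (2*m)) : Equivalence (mrg r a a') := by
  constructor
  · exact fun x => Or.inl (hr.refl x)
  · rintro x y (h | ⟨h1, h2⟩ | ⟨h1, h2⟩)
    · exact Or.inl (hr.symm h)
    · exact Or.inr (Or.inr ⟨hr.symm h2, hr.symm h1⟩)
    · exact Or.inr (Or.inl ⟨hr.symm h2, hr.symm h1⟩)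
  · rintro x y z (h | ⟨h1, h2⟩ | ⟨h1, h2⟩) (g | ⟨g1, g2⟩ | ⟨g1, g2⟩)
    · exact Or.inl (hr.trans h g)
    · exact Or.inr (Or.inl ⟨hr.trans h g1, g2⟩)
    · exact Or.inr (Or.inr ⟨hr.trans h g1, g2⟩)
    · exact Or.inr (Or.inl ⟨h1, hr.trans h2 g⟩)
    · exact Or.inr (Or.inl ⟨h1, g2⟩)
    · exact Or.inl (hr.trans h1 g2)
    · exact Or.inr (Or.inr ⟨h1, hr.trans h2 g⟩)
    · exact Or.inl (hr.trans h1 g2)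
    · exact Or.inr (Or.inr ⟨h1, g2⟩)

lemma mrg_notMem {r : Fin (2*m) → Fin (2*m) → Prop} (hr : Equivalence r)
    {a a' x : Fin (2*m)} (hx : ¬ r a x) (hx' : ¬ r a' x) (y : Fin (2*m)) :
    mrg r a a' x y ↔ r x y := by
  constructor
  · rintro (h | ⟨h1, _⟩ | ⟨h1, _⟩)
    · exact h
    · exact absurd (hr.symm h1) hx
    · exact absurd (hr.symm h1) hx'
  · exact Or.inl

lemma mrg_mem {r : Fin (2*m) → Fin (2*m) → Prop} (hr : Equivalence r)
    {a a' x : Fin (2*m)} (hx : r a x ∨ r a' x) (y : Fin (2*m)) :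
    mrg r a a' x y ↔ (r a y ∨ r a' y) := by
  rcases hx with hx | hx
  · constructor
    · rintro (h | ⟨_, h2⟩ | ⟨_, h2⟩)
      · exact Or.inl (hr.trans hx h)
      · exact Or.inr h2
      · exact Or.inl h2
    · rintro (h | h)
      · exact Or.inl (hr.trans (hr.symm hx) h)
      · exact Or.inr (Or.inl ⟨hr.symm hx, h⟩)
  · constructor
    · rintro (h | ⟨_, h2⟩ | ⟨_, h2⟩)
      · exact Or.inr (hr.trans hx h)
      · exact Or.inr h2
      · exact Or.inl h2
    · rintro (h | h)
      · exact Or.inr (Or.inr ⟨hr.symm hx, h⟩)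
      · exact Or.inl (hr.trans (hr.symm hx) h)

lemma mrg_even {r : Fin (2*m) → Fin (2*m) → Prop} (hr : Equivalence r)
    (heven : ∀ x, Even (cls r x).card) {a a' : Fin (2*m)} (hne : ¬ r a a') :
    ∀ x, Even (cls (mrg r a a') x).card := by
  intro x
  by_cases hx : r a x ∨ r a' x
  · have : cls (mrg r a a') x = cls r a ∪ cls r a' := by
      ext y
      rw [mem_cls, Finset.mem_union, mem_cls, mem_cls]
      exact mrg_mem hr hx y
    rw [this, Finset.card_union_of_disjoint]
    · exact (heven a).add (heven a')
    · rw [Finset.disjoint_left]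
      intro z hz hz'
      exact hne (hr.trans (mem_cls.1 hz) (hr.symm (mem_cls.1 hz')))
  · push_neg at hx
    have : cls (mrg r a a') x = cls r x := by
      ext y
      rw [mem_cls, mem_cls]
      exact mrg_notMem hr hx.1 hx.2 y
    rw [this]; exact heven x

lemma mrg_ncc {r : Fin (2*m) → Fin (2*m) → Prop} (hm : 0 < m) (hr : Equivalence r)
    (hnc : NCc r) (heven : ∀ x, Even (cls r x).card) {a a' : Fin (2*m)}
    (ha' : a'.val = a.val + 1) (hne : ¬ r a a') : NCc (mrg r a a') := by
  obtain ⟨s, hsa, hs1, hs2, _, hsmin, hgap⟩ := exists_gap hm hr hnc heven ha' hne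
  have hgap' : ∀ x y, r a x → r a' y → (y - a').val < (x - a').val :=
    fun x y hx hy => lt_of_lt_of_le (hgap y hy) (hsmin x hx)
  have hba := a.isLt; have hba' := a'.isLt
  have hq0 : (a' - a').val = 0 := delta_eq_zero hm |>.2 rfl
  have hqa : (a - a').val = 2*m - 1 := by rw [sub_val hm]; split_ifs <;> omega
  have hpos : ∀ z : Fin (2*m), z ≠ a' → 0 < (z - a').val := by
    intro z hz
    have : (z - a').val ≠ 0 := fun h => hz (delta_eq_zero hm |>.1 h)
    omega
  have htop : ∀ z : Fin (2*m), z ≠ a → (z - a').val < 2*m - 1 := by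
    intro z hz
    have h1 : (z - a').val ≠ 2*m - 1 := by
      intro h; exact hz (delta_inj hm (h.trans hqa.symm))
    have := (z - a').isLt; omega
  intro i j k l hc hik hjl
  by_cases hiM : r a i ∨ r a' i
  · by_cases hjM : r a j ∨ r a' j
    · rcases hiM with hi | hi <;> rcases hjM with hj | hj
      · exact Or.inl (hr.trans (hr.symm hi) hj)
      · exact Or.inr (Or.inl ⟨hr.symm hi, hj⟩)
      · exact Or.inr (Or.inr ⟨hr.symm hi, hj⟩)
      · exact Or.inl (hr.trans (hr.symm hi) hj)
    · have hjl' : r j l := by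
        rcases hjl with h | ⟨h1, _⟩ | ⟨h1, _⟩
        · exact h
        · exact absurd (Or.inl (hr.symm h1)) hjM
        · exact absurd (Or.inr (hr.symm h1)) hjM
      have hja' : j ≠ a' := fun h => hjM (Or.inr (h ▸ hr.refl a'))
      have hja : j ≠ a := fun h => hjM (Or.inl (h ▸ hr.refl a))
      rcases hik with hik' | ⟨h1, h2⟩ | ⟨h1, h2⟩
      · exact Or.inl (hnc i j k l hc hik' hjl')
      · -- γ : r i a, r a' k
        exfalso
        have hg : (k - a').val < (i - a').val := hgap' i k (hr.symm h1) h2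
        rcases cross4_cases hm a' hc with ⟨c1, c2, c3⟩ | ⟨c1, c2, c3⟩ | ⟨c1, c2, c3⟩ | ⟨c1, c2, c3⟩
        · omega
        · have hcr : Cross4 a' j k l := cross4_of_chain hm (o := a')
            (by have := hpos j hja'; omega) c1 c2
          exact hjM (Or.inr (hnc a' j k l hcr h2 hjl'))
        · have hcr : Cross4 l i j a := cross4_of_chain hm (o := a')
            c2 c3 (by have := htop j hja; omega)
          have := hnc l i j a hcr (hr.symm hjl') h1
          exact hjM (Or.inl (hr.trans (hr.symm h1) (hr.trans (hr.symm this) (hr.symm hjl')))) -- r a j?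
        · omega
      · -- δ : r i a', r a k
        exfalso
        have hg : (i - a').val < (k - a').val := hgap' k i h2 (hr.symm h1)
        have hla : l ≠ a := fun h => hjM (Or.inl (hr.symm (h ▸ hjl')))
        have hla' : l ≠ a' := fun h => hjM (Or.inr (hr.symm (h ▸ hjl')))
        rcases cross4_cases hm a' hc with ⟨c1, c2, c3⟩ | ⟨c1, c2, c3⟩ | ⟨c1, c2, c3⟩ | ⟨c1, c2, c3⟩
        · have hcr : Cross4 j k l a := cross4_of_chain hm (o := a')
            c2 c3 (by have := htop l hla; omega)
          have := hnc j k l a hcr hjl' (hr.symm h2)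
          exact hjM (Or.inl (hr.symm (hr.trans this (hr.symm h2)))) -- r a j from r j k, r a k
        · omega
        · omega
        · have hcr : Cross4 a' l i j := cross4_of_chain hm (o := a')
            (by have := hpos l hla'; omega) c1 c2
          have := hnc a' l i j hcr (hr.symm h1) (hr.symm hjl')
          exact hjM (Or.inr (hr.trans this (hr.symm hjl')))
  · have hik' : r i k := by
      rcases hik with h | ⟨h1, _⟩ | ⟨h1, _⟩
      · exact h
      · exact absurd (Or.inl (hr.symm h1)) hiM
      · exact absurd (Or.inr (hr.symm h1)) hiM
    have hia' : i ≠ a' := fun h => hiM (Or.inr (h ▸ hr.refl a'))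
    have hia : i ≠ a := fun h => hiM (Or.inl (h ▸ hr.refl a))
    rcases hjl with hjl' | ⟨h1, h2⟩ | ⟨h1, h2⟩
    · exact Or.inl (hnc i j k l hc hik' hjl')
    · -- α : r j a, r a' l
      have hg : (l - a').val < (j - a').val := hgap' j l (hr.symm h1) h2
      have hka' : k ≠ a' := fun h => hiM (Or.inr (hr.symm (h ▸ hik')))
      have hka : k ≠ a := fun h => hiM (Or.inl (hr.symm (h ▸ hik')))
      rcases cross4_cases hm a' hc with ⟨c1, c2, c3⟩ | ⟨c1, c2, c3⟩ | ⟨c1, c2, c3⟩ | ⟨c1, c2, c3⟩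
      · exact absurd hg (by omega)
      · exact absurd hg (by omega)
      · exfalso
        have hcr : Cross4 a' k l i := cross4_of_chain hm (o := a')
          (by have := hpos k hka'; omega) c1 c2
        have := hnc a' k l i hcr h2 (hr.symm hik')
        exact hiM (Or.inr (hr.trans this (hr.symm hik')))
      · have hcr : Cross4 i j k a := cross4_of_chain hm (o := a')
          c2 c3 (by have := htop k hka; omega)
        exact Or.inl (hnc i j k a hcr hik' h1)
    · -- β : r j a', r a l
      exfalso
      have hg : (j - a').val < (l - a').val := hgap' l j h2 (hr.symm h1)
      rcases cross4_cases hm a' hc with ⟨c1, c2, c3⟩ | ⟨c1, c2, c3⟩ | ⟨c1, c2, c3⟩ | ⟨c1, c2, c3⟩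
      · have hcr : Cross4 a' i j k := cross4_of_chain hm (o := a')
          (by have := hpos i hia'; omega) c1 c2
        exact hiM (Or.inr (hnc a' i j k hcr (hr.symm h1) hik'))
      · have hcr : Cross4 k l i a := cross4_of_chain hm (o := a')
          c2 c3 (by have := htop i hia; omega)
        have hkl := hnc k l i a hcr (hr.symm hik') (hr.symm h2)
        -- r a k from r a l, r k l ; then r a i
        have hak : r a k := hr.trans h2 (hr.symm hkl)
        exact hiM (Or.inl (hr.trans hak (hr.symm hik')))
      · omega
      · omega


/-- The relation on `Fin m` induced by `r`. -/
def phi (r : Fin (2*m) → Fin (2*m) → Prop) (x y : Fin m) : Prop :=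
  r (dbl x) (dbl y) ∨ r (dbl x) (dbl' y) ∨ r (dbl' x) (dbl y) ∨ r (dbl' x) (dbl' y)

-- chunk 7

lemma mrg_le' {r : Fin (2*m) → Fin (2*m) → Prop} {a a' x y : Fin (2*m)}
    (h : r x y) : mrg r a a' x y := Or.inl h

lemma phi_setoid_eq {r : Fin (2*m) → Fin (2*m) → Prop} (hr : Equivalence r)
    (j0 : Fin m) :
    Relation.EqvGen.setoid (phi (mrg r (dbl j0) (dbl' j0))) =
      Relation.EqvGen.setoid (phi r) := by
  apply Setoid.ext
  intro x y
  show Relation.EqvGen _ x y ↔ Relation.EqvGen _ x y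
  constructor
  · intro h
    induction h with
    | rel p q hpq =>
      rcases hpq with (h | ⟨h1, h2⟩ | ⟨h1, h2⟩) | (h | ⟨h1, h2⟩ | ⟨h1, h2⟩) |
        (h | ⟨h1, h2⟩ | ⟨h1, h2⟩) | (h | ⟨h1, h2⟩ | ⟨h1, h2⟩)
      · exact Relation.EqvGen.rel _ _ (Or.inl h)
      · exact Relation.EqvGen.trans _ j0 _
          (Relation.EqvGen.rel _ _ (Or.inl h1))
          (Relation.EqvGen.rel _ _ (Or.inr (Or.inr (Or.inl h2))))
      · exact Relation.EqvGen.trans _ j0 _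
          (Relation.EqvGen.rel _ _ (Or.inr (Or.inl h1)))
          (Relation.EqvGen.rel _ _ (Or.inl h2))
      · exact Relation.EqvGen.rel _ _ (Or.inr (Or.inl h))
      · exact Relation.EqvGen.trans _ j0 _
          (Relation.EqvGen.rel _ _ (Or.inl h1))
          (Relation.EqvGen.rel _ _ (Or.inr (Or.inr (Or.inr h2)))) 
      · exact Relation.EqvGen.trans _ j0 _
          (Relation.EqvGen.rel _ _ (Or.inr (Or.inl h1)))
          (Relation.EqvGen.rel _ _ (Or.inr (Or.inl h2)))
      · exact Relation.EqvGen.rel _ _ (Or.inr (Or.inr (Or.inl h)))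
      · exact Relation.EqvGen.trans _ j0 _
          (Relation.EqvGen.rel _ _ (Or.inr (Or.inr (Or.inl h1))))
          (Relation.EqvGen.rel _ _ (Or.inr (Or.inr (Or.inl h2))))
      · exact Relation.EqvGen.trans _ j0 _
          (Relation.EqvGen.rel _ _ (Or.inr (Or.inr (Or.inr h1))))
          (Relation.EqvGen.rel _ _ (Or.inl h2))
      · exact Relation.EqvGen.rel _ _ (Or.inr (Or.inr (Or.inr h)))
      · exact Relation.EqvGen.trans _ j0 _
          (Relation.EqvGen.rel _ _ (Or.inr (Or.inr (Or.inl h1))))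
          (Relation.EqvGen.rel _ _ (Or.inr (Or.inr (Or.inr h2))))
      · exact Relation.EqvGen.trans _ j0 _
          (Relation.EqvGen.rel _ _ (Or.inr (Or.inr (Or.inr h1))))
          (Relation.EqvGen.rel _ _ (Or.inr (Or.inl h2)))
    | refl p => exact Relation.EqvGen.refl p
    | symm p q _ ih => exact Relation.EqvGen.symm p q ih
    | trans p q w _ _ ih1 ih2 => exact Relation.EqvGen.trans p q w ih1 ih2
  · apply Relation.EqvGen.mono
    intro p q hpq
    rcases hpq with h | h | h | h
    · exact Or.inl (mrg_le' h)
    · exact Or.inr (Or.inl (mrg_le' h))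
    · exact Or.inr (Or.inr (Or.inl (mrg_le' h)))
    · exact Or.inr (Or.inr (Or.inr (mrg_le' h)))

lemma mrg_filter_eq {r : Fin (2*m) → Fin (2*m) → Prop} (hm : 0 < m)
    (hr : Equivalence r) (hnc : NCc r) (heven : ∀ x, Even (cls r x).card)
    {a a' : Fin (2*m)} (ha' : a'.val = a.val + 1) (hpar : a.val % 2 = 0)
    (hne : ¬ r a a') (k : Fin (2*m)) :
    (univ.filter (fun l : Fin (2*m) => l ≠ k ∧ l.val % 2 = 0 ∧
        ∀ l', mrg r a a' l l' → (l' - l).val < (k - l).val)) =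
    (univ.filter (fun l : Fin (2*m) => l ≠ k ∧ l.val % 2 = 0 ∧
        ∀ l', r l l' → (l' - l).val < (k - l).val)) := by
  obtain ⟨u, v, hu, hv, humin, hvmin, htri⟩ := merge_min hm hr hnc heven ha' hne k
  ext l
  simp only [Finset.mem_filter, Finset.mem_univ, true_and]
  constructor
  · rintro ⟨h1, h2, h3⟩
    exact ⟨h1, h2, fun l' hl' => h3 l' (mrg_le' hl')⟩
  · rintro ⟨h1, h2, h3⟩
    refine ⟨h1, h2, ?_⟩
    by_cases hM : r a l ∨ r a' l
    · have hargmin : ∀ l', r l l' → (l - k).val ≤ (l' - k).val :=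
        ((cond_iff hm hr k l).1 h3).2
      have hl_min_M : ∀ l', (r a l' ∨ r a' l') → (l - k).val ≤ (l' - k).val := by
        rcases hM with hM | hM
        · have h4 : (u - k).val ≤ (l - k).val := humin l hM
          have h5 : (l - k).val ≤ (u - k).val := hargmin u (hr.trans (hr.symm hM) hu)
          have hlu : l = u := delta_inj hm (le_antisymm h5 h4)
          rcases htri with ⟨hlt, _⟩ | ⟨hlt, hupar⟩
          · intro l' hl'
            rcases hl' with h | h
            · rw [hlu]; exact humin l' h
            · rw [hlu]; exact le_trans (le_of_lt hlt) (hvmin l' h)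
          · exfalso; rw [hlu] at h2; omega
        · have h4 : (v - k).val ≤ (l - k).val := hvmin l hM
          have h5 : (l - k).val ≤ (v - k).val := hargmin v (hr.trans (hr.symm hM) hv)
          have hlv : l = v := delta_inj hm (le_antisymm h5 h4)
          rcases htri with ⟨hlt, hvpar⟩ | ⟨hlt, _⟩
          · exfalso; rw [hlv] at h2; omega
          · intro l' hl'
            rcases hl' with h | h
            · rw [hlv]; exact le_trans (le_of_lt hlt) (humin l' h)
            · rw [hlv]; exact hvmin l' h
      apply (cond_iff hm (mrg_equiv hr a a') k l).2
      refine ⟨h1, fun l' hl' => ?_⟩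
      exact hl_min_M l' ((mrg_mem hr hM l').1 hl')
    · push_neg at hM
      intro l' hl'
      exact h3 l' ((mrg_notMem hr hM.1 hM.2 l').1 hl')

lemma base_case {r : Fin (2*m) → Fin (2*m) → Prop} (hm : 0 < m)
    (hr : Equivalence r) (k : Fin (2*m))
    (hall : ∀ j : Fin m, r (dbl j) (dbl' j)) :
    Nat.card (Quotient (Relation.EqvGen.setoid (phi r))) =
      (univ.filter (fun l : Fin (2*m) => l ≠ k ∧ l.val % 2 = 0 ∧
        ∀ l', r l l' → (l' - l).val < (k - l).val)).card + 1 := by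
  set Sr : Setoid (Fin (2*m)) := ⟨r, hr⟩ with hSr
  have hEG : ∀ x y : Fin m, Relation.EqvGen (phi r) x y ↔ r (dbl x) (dbl y) := by
    intro x y
    constructor
    · intro h
      induction h with
      | rel p q hpq =>
        rcases hpq with h | h | h | h
        · exact h
        · exact hr.trans h (hr.symm (hall q))
        · exact hr.trans (hall p) h
        · exact hr.trans (hall p) (hr.trans h (hr.symm (hall q)))
      | refl p => exact hr.refl _
      | symm p q _ ih => exact hr.symm ih
      | trans p q w _ _ ih1 ih2 => exact hr.trans ih1 ih2
    · exact fun h => Relation.EqvGen.rel _ _ (Or.inl h)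
  -- the bijection between the two quotients
  have hsound : ∀ x y : Fin m, Relation.EqvGen (phi r) x y →
      Quotient.mk Sr (dbl x) = Quotient.mk Sr (dbl y) :=
    fun x y h => Quotient.sound ((hEG x y).1 h)
  let F : Quotient (Relation.EqvGen.setoid (phi r)) → Quotient Sr :=
    Quotient.lift (fun x : Fin m => Quotient.mk Sr (dbl x)) hsound
  have hbij : Function.Bijective F := by
    constructor
    · intro p q
      induction p using Quotient.ind with
      | _ x =>
        induction q using Quotient.ind with
        | _ y =>
          intro h
          have : r (dbl x) (dbl y) := Quotient.exact h
          exact Quotient.sound ((hEG x y).2 this)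
    · intro q
      induction q using Quotient.ind with
      | _ x =>
        have hx := x.isLt
        by_cases hpar : x.val % 2 = 0
        · refine ⟨Quotient.mk _ (⟨x.val / 2, by omega⟩ : Fin m), ?_⟩
          show Quotient.mk Sr (dbl ⟨x.val / 2, _⟩) = Quotient.mk Sr x
          have : dbl (⟨x.val / 2, by omega⟩ : Fin m) = x := by
            apply Fin.ext; show 2 * (x.val / 2) = x.val; omega
          rw [this]
        · refine ⟨Quotient.mk _ (⟨x.val / 2, by omega⟩ : Fin m), ?_⟩
          show Quotient.mk Sr (dbl ⟨x.val / 2, _⟩) = Quotient.mk Sr x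
          have hd : dbl' (⟨x.val / 2, by omega⟩ : Fin m) = x := by
            apply Fin.ext; show 2 * (x.val / 2) + 1 = x.val; omega
          apply Quotient.sound
          show r _ _
          have h2 := hall (⟨x.val / 2, by omega⟩ : Fin m)
          exact cast (congrArg _ hd) h2
  have hcard1 : Nat.card (Quotient (Relation.EqvGen.setoid (phi r))) =
      Nat.card (Quotient Sr) := Nat.card_eq_of_bijective F hbij
  set A : Finset (Fin (2*m)) :=
    univ.filter (fun l => ∀ l', r l l' → (l - k).val ≤ (l' - k).val) with hA
  have hmemA : ∀ l : Fin (2*m), l ∈ A ↔ ∀ l', r l l' → (l - k).val ≤ (l' - k).val := by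
    intro l; simp [hA]
  have hcard2 : Nat.card (Quotient Sr) = A.card := by
    apply natCard_quotient_eq Sr A
    · intro x
      obtain ⟨w, hw, hwmin⟩ := Finset.exists_min_image (cls r x)
        (fun z => (z - k).val) ⟨x, mem_cls.2 (hr.refl x)⟩
      have hxw : r x w := mem_cls.1 hw
      refine ⟨w, (hmemA w).2 ?_, hr.symm hxw⟩
      intro l' hl'
      exact hwmin l' (mem_cls.2 (hr.trans hxw hl'))
    · intro p hp q hq hpq
      have h1 := (hmemA p).1 hp q hpq
      have h2 := (hmemA q).1 hq p (hr.symm hpq)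
      exact (delta_inj hm (le_antisymm h2 h1)).symm
  -- A = insert k (filter ...)
  have hAeq : A = insert k (univ.filter (fun l : Fin (2*m) => l ≠ k ∧ l.val % 2 = 0 ∧
      ∀ l', r l l' → (l' - l).val < (k - l).val)) := by
    ext l
    rw [hmemA, Finset.mem_insert, Finset.mem_filter]
    constructor
    · intro h
      by_cases hlk : l = k
      · exact Or.inl hlk
      · right
        refine ⟨Finset.mem_univ l, hlk, ?_, (cond_iff hm hr k l).2 ⟨hlk, h⟩⟩
        -- parity : l must be even
        by_contra hodd
        have hlv := l.isLt
        set j : Fin m := ⟨l.val / 2, by omega⟩ with hj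
        have hd : dbl' j = l := by
          apply Fin.ext; show 2 * (l.val / 2) + 1 = l.val; omega
        have hrl : r l (dbl j) := by
          have := hall j; rw [hd] at this; exact hr.symm this
        have hineq := h (dbl j) hrl
        have hdj : (dbl j).val = l.val - 1 := by show 2 * (l.val / 2) = l.val - 1; omega
        have hkl : k.val ≠ l.val := fun hh => hlk (Fin.ext hh.symm)
        have e1 := sub_val hm k l
        have e2 := sub_val hm k (dbl j)
        have hkv := k.isLt
        rw [e1, e2] at hineq
        split_ifs at hineq <;> omega
    · rintro (rfl | ⟨-, hlk, hpar, hcond⟩)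
      · intro l' _
        have : (l - l).val = 0 := delta_eq_zero hm |>.2 rfl
        omega
      · exact ((cond_iff hm hr k l).1 hcond).2
  rw [hcard1, hcard2, hAeq, Finset.card_insert_of_notMem]
  simp only [Finset.mem_filter]
  rintro ⟨-, hk, -, -⟩
  exact hk rfl


-- chunk 8 : induction and conclusion

lemma aux (hm : 0 < m) : ∀ (n : ℕ) (r : Fin (2*m) → Fin (2*m) → Prop),
    Equivalence r → NCc r → (∀ x, Even (cls r x).card) →
    (univ.filter (fun j : Fin m => ¬ r (dbl j) (dbl' j))).card ≤ n →
    ∀ k : Fin (2*m),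
    Nat.card (Quotient (Relation.EqvGen.setoid (phi r))) =
      (univ.filter (fun l : Fin (2*m) => l ≠ k ∧ l.val % 2 = 0 ∧
        ∀ l', r l l' → (l' - l).val < (k - l).val)).card + 1 := by
  intro n
  induction n with
  | zero =>
    intro r hr hnc heven hcard k
    have hall : ∀ j : Fin m, r (dbl j) (dbl' j) := by
      intro j
      by_contra h
      have hmem : j ∈ univ.filter (fun j : Fin m => ¬ r (dbl j) (dbl' j)) := by
        simp [h]
      have := Finset.card_pos.2 ⟨j, hmem⟩
      omega
    exact base_case hm hr k hall
  | succ n ih =>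
    intro r hr hnc heven hcard k
    by_cases hall : ∀ j : Fin m, r (dbl j) (dbl' j)
    · exact base_case hm hr k hall
    · push_neg at hall
      obtain ⟨j0, hj0⟩ := hall
      have ha' : (dbl' j0).val = (dbl j0).val + 1 := rfl
      have hpar : (dbl j0).val % 2 = 0 := by
        show 2 * j0.val % 2 = 0; omega
      have hsub : (univ.filter (fun j : Fin m =>
            ¬ mrg r (dbl j0) (dbl' j0) (dbl j) (dbl' j)))
          ⊆ (univ.filter (fun j : Fin m => ¬ r (dbl j) (dbl' j))) := by
        intro j hj
        simp only [Finset.mem_filter, Finset.mem_univ, true_and] at hj ⊢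
        exact fun h => hj (Or.inl h)
      have hlt : (univ.filter (fun j : Fin m =>
            ¬ mrg r (dbl j0) (dbl' j0) (dbl j) (dbl' j))).card
          < (univ.filter (fun j : Fin m => ¬ r (dbl j) (dbl' j))).card := by
        apply Finset.card_lt_card
        rw [Finset.ssubset_iff_of_subset hsub]
        refine ⟨j0, by simp [hj0], ?_⟩
        simp only [Finset.mem_filter, Finset.mem_univ, true_and, not_not]
        exact Or.inr (Or.inl ⟨hr.refl _, hr.refl _⟩)
      have hres := ih (mrg r (dbl j0) (dbl' j0)) (mrg_equiv hr _ _)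
        (mrg_ncc hm hr hnc heven ha' hj0) (mrg_even hr heven hj0) (by omega) k
      rw [phi_setoid_eq hr j0] at hres
      rw [mrg_filter_eq hm hr hnc heven ha' hpar hj0 k] at hres
      exact hres


end NCaux

/-- For `π ∈ NC*(1,m)` (non-crossing, even blocks) and `k ∈ [2m]`: `B(π) − 1` equals
the number of (1-based) odd elements `l ≠ k` such that every `l′` in the block of `l`
satisfies `l ≤ l′ < k` in the cyclic order starting at `l` (0-indexed: `l.val` even and
`(l′ − l).val < (k − l).val` for all `l′ ∼_π l`). -/
theorem numPhiBlocks_eq (m : ℕ) (hm : 0 < m)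
    (π : Finpartition (Finset.univ : Finset (Fin (2 * m))))
    (hnc : IsNonCrossing π) (heven : ∀ b ∈ π.parts, Even b.card)
    (k : Fin (2 * m)) :
    numPhiBlocks π =
      (Finset.univ.filter (fun l : Fin (2 * m) => l ≠ k ∧ l.val % 2 = 0 ∧
        ∀ l', SameBlock π l l' → (l' - l).val < (k - l).val)).card + 1 := by
  have hr := NCaux.sb_equiv π
  have hnc' := NCaux.ncc_of_nc hm π hnc
  have heven' : ∀ x, Even (NCaux.cls (SameBlock π) x).card := by
    intro x
    obtain ⟨t, ht, hxt⟩ := π.exists_mem (Finset.mem_univ x)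
    have hcl : NCaux.cls (SameBlock π) x = t := by
      ext y
      rw [NCaux.mem_cls]
      constructor
      · rintro ⟨u, hu, hxu, hyu⟩
        rwa [π.eq_of_mem_parts hu ht hxu hxt] at hyu
      · intro hy; exact ⟨t, ht, hxt, hy⟩
    rw [hcl]; exact heven t ht
  exact NCaux.aux hm
    (Finset.univ.filter (fun j : Fin m => ¬ SameBlock π (dbl j) (dbl' j))).card
    (SameBlock π) hr hnc' heven' (le_refl _) k
end
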